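/- arXiv:1409.3811 — 5 statements merged into one kernel-verified Lean document; each statement's English description precedes it below -/
import Mathlib

section
/- Let $\Lambda \subseteq \mathbb{R}^n$ be a convex set with $[0,1]^n \subseteq \Lambda \subseteq n^{3/2}[0,1]^n$ (the dilate taken about the center of the unit cube). For every $\epsilon \in (0,1)$ there exists a finite collection $\{C_j\}$ of almost everywhere pairwise disjoint dyadic cubes contained in $\Lambda$, each of sidelength comparable (with dimensional constants) to $\epsilon$, such that $|\Lambda \setminus \bigcup_j C_j| < \epsilon |\Lambda|$. -/
open MeasureTheory Set

/-- The closed unit cube `[0,1]ⁿ`. -/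
def unitCube (n : ℕ) : Set (Fin n → ℝ) := {x | ∀ i, x i ∈ Set.Icc (0 : ℝ) 1}

/-- The dyadic cube `2^{-m}(k + [0,1]ⁿ)`. -/
def dyadicCube (n : ℕ) (m : ℕ) (k : Fin n → ℤ) : Set (Fin n → ℝ) :=
  {x | ∀ i, x i ∈ Set.Icc ((k i : ℝ) / 2 ^ m) (((k i : ℝ) + 1) / 2 ^ m)}

lemma unitCube_pi (n : ℕ) : unitCube n = Set.pi univ (fun _ : Fin n => Icc (0:ℝ) 1) := by
  ext x; simp [unitCube, Set.mem_pi, Pi.le_def, forall_and]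

lemma dyadicCube_pi (n m : ℕ) (k : Fin n → ℤ) :
    dyadicCube n m k = Set.pi univ (fun i => Icc ((k i : ℝ) / 2 ^ m) (((k i : ℝ) + 1) / 2 ^ m)) := by
  ext x; simp [dyadicCube, Set.mem_pi, Pi.le_def, forall_and]

lemma volume_dyadic_inter (n m : ℕ) (k k' : Fin n → ℤ) (hne : k ≠ k') :
    volume (dyadicCube n m k ∩ dyadicCube n m k') = 0 := by
  have hmpos : (0:ℝ) < 2^m := by positivity
  obtain ⟨i, hi⟩ := Function.ne_iff.mp hne
  rw [dyadicCube_pi, dyadicCube_pi, ← Set.pi_inter_distrib]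
  rw [volume_pi_pi]
  refine Finset.prod_eq_zero (Finset.mem_univ i) ?_
  rw [Icc_inter_Icc, Real.volume_Icc, ENNReal.ofReal_eq_zero, sub_nonpos]
  rcases lt_or_gt_of_ne hi with h | h
  · have hc : ((k i:ℝ)+1) ≤ (k' i:ℝ) := by exact_mod_cast h
    have h1 : ((k i:ℝ)+1)/2^m ≤ (k' i:ℝ)/2^m := by gcongr
    exact le_trans inf_le_left (le_trans h1 le_sup_right)
  · have hc : ((k' i:ℝ)+1) ≤ (k i:ℝ) := by exact_mod_cast h
    have h1 : ((k' i:ℝ)+1)/2^m ≤ (k i:ℝ)/2^m := by gcongr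
    exact le_trans inf_le_right (le_trans h1 le_sup_left)

lemma volume_unitCube (n : ℕ) : volume (unitCube n) = 1 := by
  rw [unitCube_pi, volume_pi_pi]
  simp [Real.volume_Icc]

set_option maxHeartbeats 2000000 in
/-- A convex set `Λ` with `[0,1]ⁿ ⊆ Λ ⊆ n^{3/2}[0,1]ⁿ` (dilate about the center of the unit
cube) can, for every `ε ∈ (0,1)`, be approximated from inside by a finite collection of a.e.
pairwise disjoint dyadic cubes of sidelength comparable to `ε` (with dimensional constants),
up to a set of measure less than `ε|Λ|`. -/
theorem convex_dyadic_approximation (n : ℕ) (hn : 0 < n) :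
    ∃ c C : ℝ, 0 < c ∧ 0 < C ∧
      ∀ Λ : Set (Fin n → ℝ), Convex ℝ Λ →
        unitCube n ⊆ Λ →
        Λ ⊆ AffineMap.homothety (fun _ => (1 : ℝ) / 2) ((n : ℝ) ^ ((3 : ℝ) / 2)) '' unitCube n →
        ∀ ε ∈ Set.Ioo (0 : ℝ) 1,
          ∃ cubes : Finset (ℕ × (Fin n → ℤ)),
            (∀ p ∈ cubes, dyadicCube n p.1 p.2 ⊆ Λ ∧
              c * ε ≤ ((2 : ℝ) ^ p.1)⁻¹ ∧ ((2 : ℝ) ^ p.1)⁻¹ ≤ C * ε) ∧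
            (∀ p ∈ cubes, ∀ q ∈ cubes, p ≠ q →
              volume (dyadicCube n p.1 p.2 ∩ dyadicCube n q.1 q.2) = 0) ∧
            volume (Λ \ ⋃ p ∈ cubes, dyadicCube n p.1 p.2) < ENNReal.ofReal ε * volume Λ := by
  classical
  have hn' : (1:ℝ) ≤ n := by exact_mod_cast hn
  refine ⟨1/(8*n), 1, by positivity, one_pos, ?_⟩
  intro Λ hconv hΛ1 hΛ2 ε hε
  obtain ⟨hε0, hε1⟩ := hε
  set p : Fin n → ℝ := fun _ => 1/2 with hp_def
  have hp : p ∈ Λ := hΛ1 (fun i => by norm_num [hp_def])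
  obtain ⟨δ, hδdef⟩ : ∃ d : ℝ, d = ε/(2*(n:ℝ)) := ⟨_, rfl⟩
  have hδ0 : 0 < δ := by rw [hδdef]; positivity
  have hδhalf : δ ≤ 1/2 := by
    rw [hδdef, div_le_iff₀ (by positivity)]
    nlinarith
  set Λ' : Set (Fin n → ℝ) := AffineMap.homothety p (1-δ) '' Λ with hΛ'def
  -- choose m
  have hn0 : (n:ℝ) ≠ 0 := by positivity
  have hε4n : ε/(4*(n:ℝ)) < 1 := by
    rw [div_lt_one (by positivity)]; nlinarith
  obtain ⟨m, hm1, hm2⟩ : ∃ m:ℕ, ((2:ℝ)^m)⁻¹ ≤ ε/(4*n) ∧ ε/(8*n) < ((2:ℝ)^m)⁻¹ := by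
    obtain ⟨M, hM⟩ := pow_unbounded_of_one_lt (4*(n:ℝ)/ε) (by norm_num : (1:ℝ) < 2)
    have hex : ∃ m:ℕ, ((2:ℝ)^m)⁻¹ ≤ ε/(4*(n:ℝ)) := by
      refine ⟨M, ?_⟩
      have h1 : (0:ℝ) < 4*(n:ℝ)/ε := by positivity
      have h2 : ((2:ℝ)^M)⁻¹ ≤ (4*(n:ℝ)/ε)⁻¹ := by
        exact inv_anti₀ h1 hM.le
      rwa [inv_div] at h2
    refine ⟨Nat.find hex, Nat.find_spec hex, ?_⟩
    have hm0 : Nat.find hex ≠ 0 := by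
      intro h
      have h1 := Nat.find_spec hex
      rw [h] at h1
      simp at h1
      linarith
    have hlt := Nat.find_min hex (show Nat.find hex - 1 < Nat.find hex from Nat.sub_lt (Nat.pos_of_ne_zero hm0) one_pos)
    push_neg at hlt
    have hsplit : (2:ℝ)^(Nat.find hex) = 2^(Nat.find hex - 1) * 2 := by
      conv_lhs => rw [← Nat.succ_pred_eq_of_pos (Nat.pos_of_ne_zero hm0)]
      rw [pow_succ, Nat.pred_eq_sub_one]
    have hppos : (0:ℝ) < 2^(Nat.find hex - 1) := by positivity
    rw [hsplit, mul_inv]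
    have : ε/(8*(n:ℝ)) = (ε/(4*(n:ℝ)))/2 := by ring
    rw [this]
    have := hlt
    calc ε/(4*(n:ℝ))/2 < ((2:ℝ)^(Nat.find hex - 1))⁻¹/2 := by linarith
    _ = ((2:ℝ)^(Nat.find hex - 1))⁻¹ * (2:ℝ)⁻¹ := by ring
    _ ≤ _ := le_refl _
  have hmpos : (0:ℝ) < 2^m := by positivity
  -- homothety formula
  have hhom : ∀ (r : ℝ) (z : Fin n → ℝ) (i : Fin n),
      (AffineMap.homothety p r z) i = r * (z i - 1/2) + 1/2 := by
    intro r z i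
    simp only [AffineMap.homothety_apply, vsub_eq_sub, vadd_eq_add, Pi.add_apply,
      Pi.smul_apply, Pi.sub_apply, smul_eq_mul, hp_def]
    try ring
  -- Λ' ⊆ Λ
  have hΛ'sub : Λ' ⊆ Λ := by
    rintro _ ⟨z, hz, rfl⟩
    have : AffineMap.homothety p (1-δ) z = (1-δ) • z + δ • p := by
      funext i
      rw [hhom]
      simp only [Pi.add_apply, Pi.smul_apply, smul_eq_mul, hp_def]
      ring
    rw [this]
    exact hconv hz hp (by linarith) hδ0.le (by ring)
  -- margin lemma
  have hmargin : ∀ x ∈ Λ', ∀ y : Fin n → ℝ, (∀ i, |y i - x i| ≤ δ/2) → y ∈ Λ := by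
    rintro _ ⟨z, hz, rfl⟩ y hy
    have hbound : ∀ i, 0 ≤ y i - (1-δ) * z i ∧ y i - (1-δ) * z i ≤ δ := by
      intro i
      have hxi : (AffineMap.homothety p (1-δ) z) i = (1-δ) * (z i - 1/2) + 1/2 := hhom _ _ _
      have h2 := abs_le.mp (hy i)
      rw [hxi] at h2
      obtain ⟨h2a, h2b⟩ := h2
      constructor <;> nlinarith
    set w : Fin n → ℝ := δ⁻¹ • (y - (1-δ) • z) with hw_def
    have hwi : ∀ i, w i = δ⁻¹ * (y i - (1-δ) * z i) := fun i => rfl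
    have hw : w ∈ unitCube n := by
      intro i
      obtain ⟨h1, h2⟩ := hbound i
      constructor
      · rw [hwi]; positivity
      · rw [hwi]
        have h3 : δ⁻¹ * (y i - (1-δ) * z i) ≤ δ⁻¹ * δ :=
          mul_le_mul_of_nonneg_left h2 (by positivity)
        rwa [inv_mul_cancel₀ hδ0.ne'] at h3
    have hyeq : y = (1-δ) • z + δ • w := by
      funext i
      show y i = (1-δ) * z i + δ * (δ⁻¹ * (y i - (1-δ) * z i))
      rw [← mul_assoc, mul_inv_cancel₀ hδ0.ne', one_mul]
      ring
    rw [hyeq]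
    exact hconv hz (hΛ1 hw) (by linarith) hδ0.le (by ring)
  -- coordinate bound on Λ
  have hr1 : (1:ℝ) ≤ (n:ℝ)^((3:ℝ)/2) := Real.one_le_rpow hn' (by norm_num)
  have hr2 : (n:ℝ)^((3:ℝ)/2) ≤ (n:ℝ)^2 := by
    calc (n:ℝ)^((3:ℝ)/2) ≤ (n:ℝ)^((2:ℕ):ℝ) :=
          Real.rpow_le_rpow_of_exponent_le hn' (by norm_num)
    _ = (n:ℝ)^2 := by rw [Real.rpow_natCast]
  have hcoord : ∀ x ∈ Λ, ∀ i, |x i| ≤ (n:ℝ)^2 := by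
    intro x hx i
    obtain ⟨u, hu, hux⟩ := hΛ2 hx
    have hxi : x i = (n:ℝ)^((3:ℝ)/2) * (u i - 1/2) + 1/2 := by rw [← hux]; exact hhom _ _ _
    obtain ⟨hu0, hu1⟩ := hu i
    rw [abs_le]
    constructor <;> nlinarith [hr1, hr2, hu0, hu1]
  -- the finite set of cubes
  obtain ⟨B, hB_def⟩ : ∃ b : ℤ, b = 2^m * (n:ℤ)^2 := ⟨_, rfl⟩
  have hcastB : ((B:ℤ):ℝ) = 2^m * (n:ℝ)^2 := by rw [hB_def]; push_cast; ring
  set S : Set (Fin n → ℤ) := {k | (dyadicCube n m k ∩ Λ').Nonempty} with hS_def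
  have hSfin : S.Finite := by
    apply Set.Finite.subset (Set.Finite.pi (fun i : Fin n => Set.finite_Icc (-(B+1)) B))
    rintro k ⟨x, hxc, hxΛ'⟩
    have hxΛ : x ∈ Λ := hΛ'sub hxΛ'
    rw [Set.mem_pi]
    intro i _
    rw [Set.mem_Icc]
    have h1' : (k i : ℝ) ≤ x i * 2^m := (div_le_iff₀ hmpos).mp (hxc i).1
    have h2' : x i * 2^m ≤ (k i : ℝ) + 1 := (le_div_iff₀ hmpos).mp (hxc i).2
    obtain ⟨ha, hb⟩ := abs_le.mp (hcoord x hxΛ i)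
    constructor
    · have : (-(((B:ℤ):ℝ)+1)) ≤ (k i : ℝ) := by
        rw [hcastB]
        nlinarith [hmpos.le]
      exact_mod_cast this
    · have : (k i : ℝ) ≤ ((B:ℤ):ℝ) := by
        rw [hcastB]
        nlinarith [hmpos.le]
      exact_mod_cast this
  obtain ⟨cubes, hcubes_def⟩ :
      ∃ c : Finset (ℕ × (Fin n → ℤ)), c = hSfin.toFinset.image (fun k => (m, k)) := ⟨_, rfl⟩
  have hmem : ∀ q ∈ cubes, q.1 = m ∧ q.2 ∈ S := by
    intro q hq
    simp only [hcubes_def, Finset.mem_image, Set.Finite.mem_toFinset] at hq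
    obtain ⟨k, hk, rfl⟩ := hq
    exact ⟨rfl, hk⟩
  -- each cube is inside Λ
  have hδ2 : ((2:ℝ)^m)⁻¹ ≤ δ/2 := by
    have h : δ/2 = ε/(4*(n:ℝ)) := by rw [hδdef]; ring
    rw [h]; exact hm1
  have hcube_sub : ∀ k ∈ S, dyadicCube n m k ⊆ Λ := by
    rintro k ⟨x, hxc, hxΛ'⟩ y hyc
    refine hmargin x hxΛ' y ?_
    intro i
    have e1 := hxc i
    have e2 := hyc i
    have hlen : ((k i:ℝ)+1)/2^m - (k i:ℝ)/2^m = ((2:ℝ)^m)⁻¹ := by ring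
    rw [abs_le]
    constructor
    · linarith [e1.1, e1.2, e2.1, e2.2]
    · linarith [e1.1, e1.2, e2.1, e2.2]
  have hdisj : ∀ k k' : Fin n → ℤ, k ≠ k' →
      volume (dyadicCube n m k ∩ dyadicCube n m k') = 0 := volume_dyadic_inter n m
  -- coverage of Λ'
  have hcover : Λ' ⊆ ⋃ q ∈ cubes, dyadicCube n q.1 q.2 := by
    intro x hx
    set k : Fin n → ℤ := fun i => ⌊2^m * x i⌋ with hk_def
    have hxk : x ∈ dyadicCube n m k := by
      intro i
      constructor
      · rw [div_le_iff₀ hmpos]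
        calc ((k i:ℝ)) ≤ 2^m * x i := Int.floor_le _
        _ = x i * 2^m := mul_comm _ _
      · rw [le_div_iff₀ hmpos]
        calc x i * 2^m = 2^m * x i := mul_comm _ _
        _ ≤ (k i:ℝ) + 1 := (Int.lt_floor_add_one (2^m * x i)).le
    have hkc : (m, k) ∈ cubes := by
      simp only [hcubes_def, Finset.mem_image, Set.Finite.mem_toFinset]
      exact ⟨k, ⟨x, hxk, hx⟩, rfl⟩
    exact Set.mem_biUnion hkc hxk
  -- volume facts
  have hVpos : 1 ≤ volume Λ := by rw [← volume_unitCube n]; exact measure_mono hΛ1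
  have hVfin : volume Λ ≠ ⊤ := by
    refine ne_top_of_le_ne_top ?_ (measure_mono hΛ2)
    rw [Measure.addHaar_image_homothety, volume_unitCube]
    exact ENNReal.mul_ne_top ENNReal.ofReal_ne_top (by simp)
  have hΛ'conv : Convex ℝ Λ' := hconv.affine_image _
  have hVol' : volume Λ' = ENNReal.ofReal ((1-δ)^n) * volume Λ := by
    rw [hΛ'def, Measure.addHaar_image_homothety]
    congr 2
    rw [Module.finrank_fin_fun, abs_of_nonneg (pow_nonneg (by linarith) _)]
  have hΛ'fin : volume Λ' ≠ ⊤ := ne_top_of_le_ne_top hVfin (measure_mono hΛ'sub)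
  have hBern : 1 - ε/2 ≤ (1-δ)^n := by
    have hber := one_add_mul_le_pow (a := -δ) (by linarith) n
    have hnδ : (n:ℝ) * δ = ε/2 := by
      rw [hδdef]; field_simp
    have : 1 + (n:ℝ) * (-δ) = 1 - (n:ℝ)*δ := by ring
    rw [this, hnδ] at hber
    rw [← sub_eq_add_neg] at hber; exact hber
  refine ⟨cubes, ?_, ?_, ?_⟩
  · rintro ⟨a, k⟩ hq
    obtain ⟨h1, h2⟩ := hmem _ hq
    simp only at h1 h2
    subst h1
    refine ⟨hcube_sub k h2, ?_, ?_⟩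
    · have : (1/(8*(n:ℝ)))*ε = ε/(8*(n:ℝ)) := by ring
      rw [this]
      exact hm2.le
    · rw [one_mul]
      exact le_trans hm1 (div_le_self hε0.le (by linarith))
  · rintro ⟨a, k⟩ hq ⟨a', k'⟩ hq' hne
    obtain ⟨h1, h2⟩ := hmem _ hq
    obtain ⟨h1', h2'⟩ := hmem _ hq'
    simp only at h1 h2 h1' h2'
    subst h1; subst h1'
    have hkk : k ≠ k' := by
      intro h; exact hne (by rw [h])
    exact hdisj k k' hkk
  · calc volume (Λ \ ⋃ q ∈ cubes, dyadicCube n q.1 q.2)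
        ≤ volume (Λ \ Λ') := measure_mono (diff_subset_diff_right hcover)
    _ = volume Λ - volume Λ' := measure_diff hΛ'sub (Convex.nullMeasurableSet (μ := volume) hΛ'conv) hΛ'fin
    _ ≤ volume Λ - ENNReal.ofReal (1 - ε/2) * volume Λ := by
        apply tsub_le_tsub_left
        rw [hVol']
        exact mul_le_mul_left (ENNReal.ofReal_le_ofReal hBern) _
    _ = ENNReal.ofReal (ε/2) * volume Λ := by
        nth_rewrite 1 [← one_mul (volume Λ)]
        rw [← ENNReal.ofReal_one, ← ENNReal.sub_mul (fun _ _ => by first | exact hVfin | simp)]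
        congr 1
        rw [← ENNReal.ofReal_sub _ (by linarith : (0:ℝ) ≤ 1 - ε/2)]
        norm_num
    _ < ENNReal.ofReal ε * volume Λ := by
        apply ENNReal.mul_lt_mul_left (by intro h; simp [h] at hVpos) hVfin
        exact (ENNReal.ofReal_lt_ofReal_iff hε0).mpr (by linarith)
end

section
/- Let $\alpha \in (0,1)$, $0 < \epsilon < \min(\alpha, 1-\alpha)$, and let $\Lambda \subseteq \mathbb{R}^n$ be a convex set with $[0,1]^n \subseteq \Lambda \subseteq n^{3/2}[0,1]^n$. Suppose $E \subseteq \mathbb{R}^n$ is measurable with finite measure and $|E \cap \Lambda|/|\Lambda| = \alpha$. Then there exists a cube $R \subseteq \Lambda$ with $|R| \sim_n \epsilon^n$ such that $\frac{\alpha - \epsilon}{1 - \epsilon} \le \frac{|E \cap R|}{|R|} \le \frac{\alpha}{1 - \epsilon}$. -/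
open MeasureTheory Set

/-- The axes-parallel closed cube with lower corner `x0` and sidelength `h`. -/
def cube (n : ℕ) (x0 : Fin n → ℝ) (h : ℝ) : Set (Fin n → ℝ) :=
  {y | ∀ i, y i ∈ Set.Icc (x0 i) (x0 i + h)}

lemma unitCube_eq_pi (n : ℕ) : unitCube n = Set.pi Set.univ (fun _ => Set.Icc (0:ℝ) 1) := by
  ext y; simp only [unitCube, Set.mem_setOf_eq, Set.mem_univ_pi]

lemma cube_eq_pi (n : ℕ) (x0 : Fin n → ℝ) (h : ℝ) :
    cube n x0 h = Set.pi Set.univ (fun i => Set.Icc (x0 i) (x0 i + h)) := by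
  ext y; simp only [cube, Set.mem_setOf_eq, Set.mem_univ_pi]

lemma measurableSet_cube (n : ℕ) (x0 : Fin n → ℝ) (h : ℝ) :
    MeasurableSet (cube n x0 h) := by
  rw [cube_eq_pi]; exact MeasurableSet.univ_pi fun i => measurableSet_Icc

lemma volume_cube (n : ℕ) (x0 : Fin n → ℝ) (h : ℝ) :
    volume (cube n x0 h) = ENNReal.ofReal h ^ n := by
  rw [cube_eq_pi, volume_pi_pi]
  simp [Real.volume_Icc]

lemma volume_cube_toReal (n : ℕ) (x0 : Fin n → ℝ) {h : ℝ} (hh : 0 ≤ h) :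
    (volume (cube n x0 h)).toReal = h ^ n := by
  rw [volume_cube, ENNReal.toReal_pow, ENNReal.toReal_ofReal hh]

lemma cube_volume_ne_top (n : ℕ) (x0 : Fin n → ℝ) (h : ℝ) :
    volume (cube n x0 h) ≠ ⊤ := by
  rw [volume_cube]; exact ENNReal.pow_ne_top ENNReal.ofReal_ne_top

lemma volume_inter_cubes_ge (n : ℕ) (a b : Fin n → ℝ) {h M : ℝ}
    (hM0 : 0 ≤ M) (hMh : M ≤ h) (hab : ∀ i, |a i - b i| ≤ M) :
    ENNReal.ofReal (h - M) ^ n ≤ volume (cube n a h ∩ cube n b h) := by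
  have hinter : cube n a h ∩ cube n b h =
      Set.pi Set.univ fun i => Set.Icc (max (a i) (b i)) (min (a i) (b i) + h) := by
    rw [cube_eq_pi, cube_eq_pi, ← Set.pi_inter_distrib]
    refine Set.pi_congr rfl fun i _ => ?_
    rw [Set.Icc_inter_Icc, min_add_add_right]
  rw [hinter, volume_pi_pi]
  calc ENNReal.ofReal (h - M) ^ n = ∏ _i : Fin n, ENNReal.ofReal (h - M) := by
        simp [Finset.prod_const]
    _ ≤ ∏ i : Fin n, volume (Set.Icc (max (a i) (b i)) (min (a i) (b i) + h)) := by
        refine Finset.prod_le_prod' ?_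
        intro i _
        rw [Real.volume_Icc]
        apply ENNReal.ofReal_le_ofReal
        have h1 := hab i
        have h2 : max (a i) (b i) - min (a i) (b i) = |b i - a i| := max_sub_min_eq_abs _ _
        rw [abs_sub_comm] at h2
        linarith
lemma cube_diff_toReal_le (n : ℕ) (a b : Fin n → ℝ) {h M : ℝ} (hM0 : 0 ≤ M) (hMh : M ≤ h)
    (hab : ∀ i, |a i - b i| ≤ M) :
    (volume (cube n a h \ cube n b h)).toReal ≤ h ^ n - (h - M) ^ n := by
  have h0 : (0:ℝ) ≤ h := le_trans hM0 hMh
  have e := measure_inter_add_diff (μ := volume) (cube n a h) (measurableSet_cube n b h)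
  have hfin : volume (cube n a h) ≠ ⊤ := cube_volume_ne_top n a h
  have hfin1 : volume (cube n a h ∩ cube n b h) ≠ ⊤ :=
    ne_top_of_le_ne_top hfin (measure_mono Set.inter_subset_left)
  have hfin2 : volume (cube n a h \ cube n b h) ≠ ⊤ :=
    ne_top_of_le_ne_top hfin (measure_mono Set.diff_subset)
  have e' : (volume (cube n a h ∩ cube n b h)).toReal
      + (volume (cube n a h \ cube n b h)).toReal = h ^ n := by
    rw [← ENNReal.toReal_add hfin1 hfin2, e, volume_cube_toReal n a h0]
  have hge : (h - M) ^ n ≤ (volume (cube n a h ∩ cube n b h)).toReal := by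
    have h1 := volume_inter_cubes_ge n a b hM0 hMh hab
    have h2 : ((ENNReal.ofReal (h - M)) ^ n).toReal = (h - M) ^ n := by
      rw [ENNReal.toReal_pow, ENNReal.toReal_ofReal (by linarith)]
    rw [← h2]
    exact ENNReal.toReal_mono hfin1 h1
  linarith

lemma density_shift_le (n : ℕ) (E : Set (Fin n → ℝ)) (hEfin : volume E ≠ ⊤)
    (a b : Fin n → ℝ) (h : ℝ) :
    (volume (E ∩ cube n a h)).toReal ≤ (volume (E ∩ cube n b h)).toReal +
      (volume (cube n a h \ cube n b h)).toReal := by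
  have hsub : E ∩ cube n a h ⊆ (E ∩ cube n b h) ∪ (cube n a h \ cube n b h) := by
    intro x hx; by_cases hb : x ∈ cube n b h
    · exact Or.inl ⟨hx.1, hb⟩
    · exact Or.inr ⟨hx.2, hb⟩
  have h1 : volume (E ∩ cube n b h) ≠ ⊤ :=
    ne_top_of_le_ne_top hEfin (measure_mono Set.inter_subset_left)
  have h2 : volume (cube n a h \ cube n b h) ≠ ⊤ :=
    ne_top_of_le_ne_top (cube_volume_ne_top n a h) (measure_mono Set.diff_subset)
  have hle : volume (E ∩ cube n a h) ≤ volume (E ∩ cube n b h) + volume (cube n a h \ cube n b h) :=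
    le_trans (measure_mono hsub) (measure_union_le _ _)
  have := ENNReal.toReal_mono (ENNReal.add_ne_top.2 ⟨h1, h2⟩) hle
  rwa [ENNReal.toReal_add h1 h2] at this

lemma continuous_cube_density (n : ℕ) (E : Set (Fin n → ℝ)) (hEfin : volume E ≠ ⊤)
    (x1 d : Fin n → ℝ) {h : ℝ} (hh : 0 < h) :
    Continuous fun s : ℝ => (volume (E ∩ cube n (fun i => x1 i + s * d i) h)).toReal := by
  set F : ℝ → ℝ := fun s => (volume (E ∩ cube n (fun i => x1 i + s * d i) h)).toReal with hF
  rw [continuous_iff_continuousAt]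
  intro s
  set D : ℝ := (∑ i, |d i|) + 1 with hD
  have hD0 : 0 < D := by positivity
  have hdD : ∀ i, |d i| ≤ D := by
    intro i
    have : |d i| ≤ ∑ j, |d j| :=
      Finset.single_le_sum (f := fun j => |d j|) (fun j _ => abs_nonneg _) (Finset.mem_univ i)
    linarith
  have key : ∀ s' : ℝ, |s' - s| * D ≤ h → |F s' - F s| ≤ h ^ n - (h - |s' - s| * D) ^ n := by
    intro s' hs'
    have hM0 : 0 ≤ |s' - s| * D := by positivity
    have hab : ∀ i, |(x1 i + s' * d i) - (x1 i + s * d i)| ≤ |s' - s| * D := by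
      intro i
      have he : (x1 i + s' * d i) - (x1 i + s * d i) = (s' - s) * d i := by ring
      rw [he, abs_mul]
      exact mul_le_mul_of_nonneg_left (hdD i) (abs_nonneg _)
    have hab' : ∀ i, |(x1 i + s * d i) - (x1 i + s' * d i)| ≤ |s' - s| * D := by
      intro i; rw [abs_sub_comm]; exact hab i
    rw [abs_sub_le_iff]
    constructor
    · have h1 := density_shift_le n E hEfin (fun i => x1 i + s' * d i) (fun i => x1 i + s * d i) h
      have h2 := cube_diff_toReal_le n (fun i => x1 i + s' * d i) (fun i => x1 i + s * d i) hM0 hs' hab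
      simp only [hF]; linarith
    · have h1 := density_shift_le n E hEfin (fun i => x1 i + s * d i) (fun i => x1 i + s' * d i) h
      have h2 := cube_diff_toReal_le n (fun i => x1 i + s * d i) (fun i => x1 i + s' * d i) hM0 hs' hab'
      simp only [hF]; linarith
  rw [ContinuousAt, tendsto_iff_dist_tendsto_zero]
  have hcont : Continuous fun s' : ℝ => h ^ n - (h - |s' - s| * D) ^ n := by
    continuity
  have htend : Filter.Tendsto (fun s' => h ^ n - (h - |s' - s| * D) ^ n) (nhds s) (nhds 0) := by
    have := hcont.tendsto s
    simpa using this
  refine squeeze_zero' (Filter.Eventually.of_forall fun t => dist_nonneg) ?_ htend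
  have hball : ∀ᶠ s' in nhds s, |s' - s| < h / D :=
    Metric.eventually_nhds_iff.mpr ⟨h / D, by positivity, fun {y} hy => by
      rwa [Real.dist_eq] at hy⟩
  filter_upwards [hball] with s' hs'
  have hle : |s' - s| * D ≤ h := by
    rw [← le_div_iff₀ hD0]
    exact le_of_lt hs'
  rw [Real.dist_eq]
  exact key s' hle


set_option maxHeartbeats 1000000 in
/-- If `Λ` is convex with `[0,1]ⁿ ⊆ Λ ⊆ n^{3/2}[0,1]ⁿ`, `E` has finite measure with
`|E ∩ Λ|/|Λ| = α`, and `0 < ε < min(α, 1-α)`, then there is a cube `R ⊆ Λ` with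
`|R| ∼_n εⁿ` whose `E`-density lies between `(α-ε)/(1-ε)` and `α/(1-ε)`. -/
theorem exists_cube_of_intermediate_density (n : ℕ) (hn : 0 < n) :
    ∃ c C : ℝ, 0 < c ∧ 0 < C ∧
      ∀ (α ε : ℝ) (Λ E : Set (Fin n → ℝ)),
        α ∈ Set.Ioo (0 : ℝ) 1 → 0 < ε → ε < min α (1 - α) →
        Convex ℝ Λ → unitCube n ⊆ Λ →
        Λ ⊆ AffineMap.homothety (fun _ => (1 : ℝ) / 2) ((n : ℝ) ^ ((3 : ℝ) / 2)) '' unitCube n →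
        MeasurableSet E → volume E < ⊤ →
        (volume (E ∩ Λ)).toReal = α * (volume Λ).toReal →
        ∃ (x0 : Fin n → ℝ) (h : ℝ), 0 < h ∧ cube n x0 h ⊆ Λ ∧
          c * ε ^ n ≤ (volume (cube n x0 h)).toReal ∧
          (volume (cube n x0 h)).toReal ≤ C * ε ^ n ∧
          (α - ε) / (1 - ε) * (volume (cube n x0 h)).toReal ≤
            (volume (E ∩ cube n x0 h)).toReal ∧
          (volume (E ∩ cube n x0 h)).toReal ≤ α / (1 - ε) * (volume (cube n x0 h)).toReal := by
  have hn1 : (1:ℝ) ≤ n := by exact_mod_cast hn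
  refine ⟨(1 / (4*n)) ^ n, (1 / (4*n)) ^ n, by positivity, by positivity, ?_⟩
  intro α ε Λ E hα hε hεm hconv hunit hbig hE hEfin hdens
  obtain ⟨hα0, hα1⟩ := hα
  have hεα : ε < α := lt_of_lt_of_le hεm (min_le_left _ _)
  have hεα' : ε < 1 - α := lt_of_lt_of_le hεm (min_le_right _ _)
  have hε1 : ε < 1 := by linarith
  have hEfin' : volume E ≠ ⊤ := hEfin.ne
  -- basic quantities
  set r : ℝ := (n : ℝ) ^ ((3:ℝ)/2) with hr_def
  have hr1 : 1 ≤ r := Real.one_le_rpow hn1 (by norm_num)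
  set c₀ : Fin n → ℝ := fun _ => (1:ℝ)/2 with hc₀_def
  have hc₀unit : c₀ ∈ unitCube n := by intro i; constructor <;> norm_num
  have hc₀Λ : c₀ ∈ Λ := hunit hc₀unit
  have hhom : ∀ (rr : ℝ) (x : Fin n → ℝ) (i : Fin n),
      (AffineMap.homothety c₀ rr x) i = rr * (x i - 1/2) + 1/2 := by
    intro rr x i
    simp [AffineMap.homothety_apply, Pi.smul_apply, smul_eq_mul, hc₀_def]
  -- coordinates of Λ are bounded
  have hcoord : ∀ y ∈ Λ, ∀ i, |y i - 1/2| ≤ r/2 := by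
    intro y hy i
    obtain ⟨x, hx, rfl⟩ := hbig hy
    rw [hhom]
    have hxi := hx i
    have : |x i - 1/2| ≤ 1/2 := by
      rw [abs_le]; constructor <;> [linarith [hxi.1]; linarith [hxi.2]]
    calc |r * (x i - 1/2) + 1/2 - 1/2| = r * |x i - 1/2| := by
          rw [add_sub_cancel_right, abs_mul, abs_of_nonneg (by linarith)]
      _ ≤ r * (1/2) := by nlinarith
      _ = r/2 := by ring
  -- Λ has finite volume and volume ≥ 1
  have hΛfin : volume Λ ≠ ⊤ := by
    refine ne_top_of_le_ne_top ?_ (measure_mono hbig)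
    rw [MeasureTheory.Measure.addHaar_image_homothety, volume_unitCube, mul_one]
    exact ENNReal.ofReal_ne_top
  set V : ℝ := (volume Λ).toReal with hV_def
  have hV1 : 1 ≤ V := by
    have h1 : volume (unitCube n) ≤ volume Λ := measure_mono hunit
    have := ENNReal.toReal_mono hΛfin h1
    rwa [volume_unitCube, ENNReal.toReal_one] at this
  have hV0 : 0 < V := by linarith
  -- the scale
  set h : ℝ := ε / (4*n) with hh_def
  have hh0 : 0 < h := by positivity
  have hh4 : h ≤ ε/4 := by
    rw [hh_def, div_le_div_iff₀ (by positivity) (by norm_num)]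
    nlinarith
  have hh1 : h < 1 := by linarith
  set t : ℝ := 2*h with ht_def
  have ht0 : 0 < t := by positivity
  have ht1 : t ≤ 1/2 := by linarith
  have hnt : (n:ℝ) * t ≤ ε := by
    have hnne : (n:ℝ) ≠ 0 := by positivity
    have he : (n:ℝ) * t = ε/2 := by rw [ht_def, hh_def]; field_simp; ring
    linarith
  -- the shrunken set
  set Λt : Set (Fin n → ℝ) := AffineMap.homothety c₀ (1-t) '' Λ with hΛt_def
  have hΛtΛ : Λt ⊆ Λ := by
    rintro _ ⟨w, hw, rfl⟩
    have hmem := hconv hw hc₀Λ (by linarith : (0:ℝ) ≤ 1 - t) (le_of_lt ht0) (by ring)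
    convert hmem using 1
    funext i
    rw [hhom]
    simp only [Pi.add_apply, Pi.smul_apply, smul_eq_mul, hc₀_def]
    ring
  have hΛtmeas : NullMeasurableSet Λt volume :=
    ((hconv.affine_image _)).nullMeasurableSet _
  have hΛtfin : volume Λt ≠ ⊤ := ne_top_of_le_ne_top hΛfin (measure_mono hΛtΛ)
  have hΛtvol : (volume Λt).toReal = (1-t)^n * V := by
    rw [hΛt_def, MeasureTheory.Measure.addHaar_image_homothety]
    rw [ENNReal.toReal_mul, ENNReal.toReal_ofReal (abs_nonneg _)]
    congr 1
    rw [Module.finrank_fin_fun, abs_of_nonneg (pow_nonneg (by linarith) n)]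
  -- the boundary layer has measure ≤ ε V
  have hlayer : (volume (Λ \ Λt)).toReal ≤ ε * V := by
    rw [measure_diff hΛtΛ hΛtmeas hΛtfin, ENNReal.toReal_sub_of_le (measure_mono hΛtΛ) hΛfin,
      hΛtvol]
    have hbern : 1 - (n:ℝ)*t ≤ (1-t)^n := by
      have := one_add_mul_le_pow (show (-2:ℝ) ≤ -t by linarith) n
      rw [show (1:ℝ) + -t = 1 - t by ring] at this
      linarith [this]
    nlinarith
  -- the grid
  set Q : (Fin n → ℤ) → Set (Fin n → ℝ) := fun k => cube n (fun i => h * (k i : ℝ)) h with hQ_def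
  set S : Set (Fin n → ℤ) := {k | Q k ⊆ Λ} with hS_def
  have hSfin : S.Finite := by
    refine Set.Finite.subset (Set.Finite.pi (fun _ : Fin n =>
      Set.finite_Icc (⌈(1/2 - r/2)/h⌉ : ℤ) ⌊(1/2 + r/2)/h⌋)) ?_
    intro k hk i _
    have hcorner : (fun i => h * (k i : ℝ)) ∈ Q k := by
      intro j; exact ⟨le_refl _, by linarith⟩
    have hb := hcoord _ (hk hcorner) i
    rw [abs_le] at hb
    rw [Set.mem_Icc]
    constructor
    · refine Int.ceil_le.mpr ?_
      rw [div_le_iff₀ hh0]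
      have h1 := hb.1
      linarith [mul_comm h ((k i : ℝ))]
    · refine Int.le_floor.mpr ?_
      rw [le_div_iff₀ hh0]
      have h1 := hb.2
      linarith [mul_comm h ((k i : ℝ))]
  set T : Finset (Fin n → ℤ) := hSfin.toFinset with hT_def
  have hQsub : ∀ k ∈ T, Q k ⊆ Λ := fun k hk => hSfin.mem_toFinset.mp hk
  have hT0 : (0 : Fin n → ℤ) ∈ T := by
    rw [hSfin.mem_toFinset]
    intro y hy
    apply hunit
    intro i
    have h1 := hy i
    simp only [Pi.zero_apply, Int.cast_zero, mul_zero, zero_add] at h1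
    exact ⟨h1.1, by linarith [h1.2]⟩
  have hTne : T.Nonempty := ⟨0, hT0⟩
  set K : Set (Fin n → ℝ) := ⋃ k ∈ T, Q k with hK_def
  have hKmeas : MeasurableSet K :=
    MeasurableSet.biUnion T.countable_toSet (fun k _ => measurableSet_cube n _ h)
  have hKΛ : K ⊆ Λ := Set.iUnion₂_subset hQsub
  have hKfin : volume K ≠ ⊤ := ne_top_of_le_ne_top hΛfin (measure_mono hKΛ)
  set O : (Fin n → ℤ) → Set (Fin n → ℝ) :=
    fun k => Set.pi Set.univ fun i => Set.Ioo (h * (k i : ℝ)) (h * (k i : ℝ) + h) with hO_def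
  have hOQ : ∀ k, O k ⊆ Q k := by
    intro k y hy i
    have h1 := hy i (Set.mem_univ i)
    exact ⟨le_of_lt h1.1, le_of_lt h1.2⟩
  have hOmeas : ∀ k, MeasurableSet (O k) :=
    fun k => MeasurableSet.univ_pi fun i => measurableSet_Ioo
  have hOvol : ∀ k, (volume (O k)).toReal = h ^ n := by
    intro k
    rw [hO_def]
    simp only [volume_pi_pi, Real.volume_Ioo, add_sub_cancel_left]
    rw [Finset.prod_const, ENNReal.toReal_pow, ENNReal.toReal_ofReal (le_of_lt hh0)]
    simp
  have hOvol' : ∀ k, volume (O k) ≠ ⊤ := by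
    intro k
    rw [hO_def]
    simp only [volume_pi_pi, Real.volume_Ioo, add_sub_cancel_left, Finset.prod_const]
    exact ENNReal.pow_ne_top ENNReal.ofReal_ne_top
  have hOdisj : ∀ k k' : Fin n → ℤ, k ≠ k' → Disjoint (O k) (O k') := by
    intro k k' hkk
    rw [Set.disjoint_left]
    intro y hy hy'
    have hex : ∃ i, k i ≠ k' i := by
      by_contra hc; push_neg at hc; exact hkk (funext hc)
    obtain ⟨i, hi⟩ := hex
    have h1 := hy i (Set.mem_univ i)
    have h2 := hy' i (Set.mem_univ i)
    rcases lt_or_gt_of_ne hi with hlt | hlt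
    · have hc : ((k i : ℝ) + 1) ≤ (k' i : ℝ) := by exact_mod_cast Int.add_one_le_iff.mpr hlt
      nlinarith [h1.2, h2.1]
    · have hc : ((k' i : ℝ) + 1) ≤ (k i : ℝ) := by exact_mod_cast Int.add_one_le_iff.mpr hlt
      nlinarith [h2.2, h1.1]
  -- volume counting
  have hsum_le : (volume K).toReal ≤ (T.card : ℝ) * h ^ n := by
    have h1 : volume K ≤ ∑ k ∈ T, volume (Q k) := measure_biUnion_finset_le T Q
    have hne : (∑ k ∈ T, volume (Q k)) ≠ ⊤ :=
      (ENNReal.sum_lt_top.mpr fun k _ => (cube_volume_ne_top n _ h).lt_top).ne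
    have h2 : (∑ k ∈ T, volume (Q k)).toReal = (T.card : ℝ) * h ^ n := by
      rw [ENNReal.toReal_sum (fun k _ => cube_volume_ne_top n _ h),
        Finset.sum_congr rfl (fun k _ => volume_cube_toReal n _ (le_of_lt hh0)),
        Finset.sum_const, nsmul_eq_mul]
    rw [← h2]
    exact ENNReal.toReal_mono hne h1
  have hsum_ge : (T.card : ℝ) * h ^ n ≤ (volume K).toReal := by
    have hdisj : (T : Set (Fin n → ℤ)).PairwiseDisjoint O :=
      fun k _ k' _ hkk => hOdisj k k' hkk
    have h1 : volume (⋃ k ∈ T, O k) = ∑ k ∈ T, volume (O k) :=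
      measure_biUnion_finset hdisj (fun k _ => hOmeas k)
    have h2 : (⋃ k ∈ T, O k) ⊆ K := Set.iUnion₂_mono fun k _ => hOQ k
    have h3 := ENNReal.toReal_mono hKfin (measure_mono h2)
    rw [h1, ENNReal.toReal_sum (fun k _ => hOvol' k),
      Finset.sum_congr rfl (fun k _ => hOvol k), Finset.sum_const, nsmul_eq_mul] at h3
    exact h3
  -- every point of Λt lies in K
  have hcov : ∀ y, y ∈ Λt → y ∈ K := by
    intro y hyt
    obtain ⟨w, hw, hwy⟩ := hyt
    have ht' : t ≠ 0 := ne_of_gt ht0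
    have hyi : ∀ i, y i = (1-t) * w i + t/2 := by
      intro i
      rw [← hwy, hhom]
      ring
    set k : Fin n → ℤ := fun i => ⌊y i / h⌋ with hk_def
    have hyQ : y ∈ Q k := by
      intro i
      have f1 : ((⌊y i / h⌋ : ℤ) : ℝ) ≤ y i / h := Int.floor_le _
      have f2 : y i / h < (⌊y i / h⌋ : ℝ) + 1 := Int.lt_floor_add_one _
      have f3 : h * (y i / h) = y i := by field_simp
      constructor
      · have h1 := mul_le_mul_of_nonneg_left f1 (le_of_lt hh0)
        rw [f3] at h1
        exact h1
      · have h1 := mul_lt_mul_of_pos_left f2 hh0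
        rw [f3] at h1
        have he : h * ((⌊y i / h⌋ : ℝ) + 1) = h * ((⌊y i / h⌋ : ℤ) : ℝ) + h := by
          push_cast; ring
        rw [he] at h1
        exact le_of_lt h1
    have hQΛ : Q k ⊆ Λ := by
      intro z hz
      have hzy : ∀ i, |z i - y i| ≤ h := by
        intro i
        have h1 := hz i
        have h2 := hyQ i
        rw [abs_le]
        exact ⟨by linarith [h1.1, h2.2], by linarith [h1.2, h2.1]⟩
      set v : Fin n → ℝ := fun i => 1/2 + (z i - y i)/t with hv_def
      have hv : v ∈ unitCube n := by
        intro i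
        have h1 : |(z i - y i)/t| ≤ 1/2 := by
          rw [abs_div, abs_of_pos ht0, div_le_iff₀ ht0]
          have h2 := hzy i
          rw [ht_def] at *
          linarith
        rw [abs_le] at h1
        simp only [hv_def, Set.mem_Icc]
        constructor <;> [linarith [h1.1]; linarith [h1.2]]
      have hvΛ : v ∈ Λ := hunit hv
      have hcomb := hconv hw hvΛ (by linarith : (0:ℝ) ≤ 1-t) (le_of_lt ht0) (by ring)
      have hz' : z = (1-t) • w + t • v := by
        funext i
        simp only [Pi.add_apply, Pi.smul_apply, smul_eq_mul, hv_def]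
        have e1 : t * ((z i - y i)/t) = z i - y i := by field_simp
        calc z i = ((1-t)*w i + t/2) + (z i - y i) := by rw [← hyi i]; ring
          _ = (1-t)*w i + (t*(1/2) + t*((z i - y i)/t)) := by rw [e1]; ring
          _ = (1-t)*w i + t*(1/2 + (z i - y i)/t) := by ring
      rw [hz']
      exact hcomb
    have hkT : k ∈ T := hSfin.mem_toFinset.mpr hQΛ
    exact Set.mem_biUnion hkT hyQ
  have hKge : (1-ε) * V ≤ (volume K).toReal := by
    have h2 : Λ \ K ⊆ Λ \ Λt := fun y hy => ⟨hy.1, fun hyt => hy.2 (hcov y hyt)⟩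
    have hfinΛt : volume (Λ \ Λt) ≠ ⊤ :=
      ne_top_of_le_ne_top hΛfin (measure_mono Set.diff_subset)
    have h3 : (volume (Λ \ K)).toReal ≤ ε * V :=
      le_trans (ENNReal.toReal_mono hfinΛt (measure_mono h2)) hlayer
    have h4 : (volume (Λ \ K)).toReal = V - (volume K).toReal := by
      rw [measure_diff hKΛ hKmeas.nullMeasurableSet hKfin,
        ENNReal.toReal_sub_of_le (measure_mono hKΛ) hΛfin]
    linarith
  -- splitting the density of E
  have hEQfin : ∀ k : Fin n → ℤ, volume (E ∩ Q k) ≠ ⊤ :=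
    fun k => ne_top_of_le_ne_top hEfin' (measure_mono Set.inter_subset_left)
  have hEKfin : volume (E ∩ K) ≠ ⊤ :=
    ne_top_of_le_ne_top hEfin' (measure_mono Set.inter_subset_left)
  have hsplit : (volume (E ∩ K)).toReal + (volume ((E ∩ Λ) \ K)).toReal = α * V := by
    have h1 := measure_inter_add_diff (μ := volume) (E ∩ Λ) hKmeas
    have h2 : E ∩ Λ ∩ K = E ∩ K := by
      rw [Set.inter_assoc, Set.inter_eq_self_of_subset_right hKΛ]
    rw [h2] at h1
    have hfd : volume ((E ∩ Λ) \ K) ≠ ⊤ :=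
      ne_top_of_le_ne_top hEfin' (measure_mono (fun y hy => hy.1.1))
    rw [← hdens, ← h1, ENNReal.toReal_add hEKfin hfd]
  have hdiffK : (volume ((E ∩ Λ) \ K)).toReal ≤ V - (volume K).toReal := by
    have h2 : (E ∩ Λ) \ K ⊆ Λ \ K := fun y hy => ⟨hy.1.2, hy.2⟩
    have hfin2 : volume (Λ \ K) ≠ ⊤ := ne_top_of_le_ne_top hΛfin (measure_mono Set.diff_subset)
    have h3 := ENNReal.toReal_mono hfin2 (measure_mono h2)
    have h4 : (volume (Λ \ K)).toReal = V - (volume K).toReal := by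
      rw [measure_diff hKΛ hKmeas.nullMeasurableSet hKfin,
        ENNReal.toReal_sub_of_le (measure_mono hKΛ) hΛfin]
    linarith
  -- claim A : some grid cube has density at least (α-ε)/(1-ε)
  have hne1ε : (1:ℝ) - ε ≠ 0 := by linarith
  have claimA : ∃ k ∈ T, (α - ε)/(1-ε) * h ^ n ≤ (volume (E ∩ Q k)).toReal := by
    by_contra hA
    push_neg at hA
    set L : ℝ := (α - ε)/(1-ε) with hL_def
    have hL0 : 0 ≤ L := div_nonneg (by linarith) (by linarith)
    have hsub : E ∩ K ⊆ ⋃ k ∈ T, E ∩ Q k := by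
      intro y hy
      have h1 := hy.2
      rw [hK_def, Set.mem_iUnion₂] at h1
      obtain ⟨k, hkT, hkQ⟩ := h1
      exact Set.mem_biUnion hkT ⟨hy.1, hkQ⟩
    have h1 : volume (E ∩ K) ≤ ∑ k ∈ T, volume (E ∩ Q k) :=
      le_trans (measure_mono hsub) (measure_biUnion_finset_le T _)
    have hne : (∑ k ∈ T, volume (E ∩ Q k)) ≠ ⊤ :=
      (ENNReal.sum_lt_top.mpr fun k _ => (hEQfin k).lt_top).ne
    have h2 : (volume (E ∩ K)).toReal ≤ ∑ k ∈ T, (volume (E ∩ Q k)).toReal := by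
      have h2' := ENNReal.toReal_mono hne h1
      rwa [ENNReal.toReal_sum (fun k _ => hEQfin k)] at h2'
    have h3 : ∑ k ∈ T, (volume (E ∩ Q k)).toReal < ∑ _k ∈ T, L * h ^ n :=
      Finset.sum_lt_sum_of_nonempty hTne (fun k hk => hA k hk)
    rw [Finset.sum_const, nsmul_eq_mul] at h3
    have e3 : (volume (E ∩ K)).toReal < L * (volume K).toReal := by
      calc (volume (E ∩ K)).toReal < (T.card:ℝ) * (L * h^n) := lt_of_le_of_lt h2 h3
        _ = L * ((T.card:ℝ) * h^n) := by ring
        _ ≤ L * (volume K).toReal := mul_le_mul_of_nonneg_left hsum_ge hL0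
    have e1 : (1 - L) * (1 - ε) = 1 - α := by
      rw [hL_def]; field_simp; ring
    have e2 : (1-L) * ((1-ε) * V) ≤ (1-L) * (volume K).toReal := by
      apply mul_le_mul_of_nonneg_left hKge
      nlinarith [e1]
    have e4 : (1-L) * ((1-ε)*V) = (1-α) * V := by rw [← e1]; ring
    have e5 : (1-L) * (volume K).toReal = (volume K).toReal - L * (volume K).toReal := by ring
    linarith [hsplit, hdiffK]
  -- claim B : some grid cube has density at most α/(1-ε)
  have claimB : ∃ k ∈ T, (volume (E ∩ Q k)).toReal ≤ α/(1-ε) * h ^ n := by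
    by_contra hB
    push_neg at hB
    set U : ℝ := α/(1-ε) with hU_def
    have hU0 : 0 ≤ U := div_nonneg (le_of_lt hα0) (by linarith)
    have hOvolE : ∀ k : Fin n → ℤ, volume (O k) = ENNReal.ofReal h ^ n := by
      intro k
      rw [hO_def]
      simp only [volume_pi_pi, Real.volume_Ioo, add_sub_cancel_left, Finset.prod_const]
      simp
    have hEQO : ∀ k : Fin n → ℤ, volume (E ∩ Q k) ≤ volume (E ∩ O k) := by
      intro k
      have hQO0 : volume (Q k \ O k) = 0 := by
        rw [measure_diff (hOQ k) (hOmeas k).nullMeasurableSet (hOvol' k), hOvolE k,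
          hQ_def, volume_cube, tsub_self]
      calc volume (E ∩ Q k) ≤ volume ((E ∩ O k) ∪ (Q k \ O k)) := by
            apply measure_mono
            intro y hy
            by_cases ho : y ∈ O k
            · exact Or.inl ⟨hy.1, ho⟩
            · exact Or.inr ⟨hy.2, ho⟩
        _ ≤ volume (E ∩ O k) + volume (Q k \ O k) := measure_union_le _ _
        _ = volume (E ∩ O k) := by rw [hQO0, add_zero]
    have hdisjE : (T : Set (Fin n → ℤ)).PairwiseDisjoint (fun k => E ∩ O k) :=
      fun k _ k' _ hkk =>
        (hOdisj k k' hkk).mono Set.inter_subset_right Set.inter_subset_right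
    have h1 : ∑ k ∈ T, volume (E ∩ O k) = volume (⋃ k ∈ T, E ∩ O k) :=
      (measure_biUnion_finset hdisjE (fun k _ => hE.inter (hOmeas k))).symm
    have h2 : volume (⋃ k ∈ T, E ∩ O k) ≤ volume (E ∩ K) := by
      apply measure_mono
      refine Set.iUnion₂_subset fun k hk => ?_
      exact Set.inter_subset_inter_right E ((hOQ k).trans (Set.subset_biUnion_of_mem hk))
    have h3 : ∑ k ∈ T, volume (E ∩ Q k) ≤ volume (E ∩ K) :=
      le_trans (Finset.sum_le_sum fun k _ => hEQO k) (le_trans (le_of_eq h1) h2)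
    have h4 : ∑ k ∈ T, (volume (E ∩ Q k)).toReal ≤ (volume (E ∩ K)).toReal := by
      have h4' := ENNReal.toReal_mono hEKfin h3
      rwa [ENNReal.toReal_sum (fun k _ => hEQfin k)] at h4'
    have h5 : (T.card : ℝ) * (U * h ^ n) < ∑ k ∈ T, (volume (E ∩ Q k)).toReal := by
      have h5' := Finset.sum_lt_sum_of_nonempty hTne (fun k hk => hB k hk)
      rwa [Finset.sum_const, nsmul_eq_mul] at h5'
    have h6 : (volume (E ∩ K)).toReal ≤ α * V := by
      have := ENNReal.toReal_nonneg (a := volume ((E ∩ Λ) \ K))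
      linarith [hsplit]
    have e1 : U * (1-ε) = α := by rw [hU_def]; field_simp
    have e2 : U * ((1-ε)*V) ≤ U * (volume K).toReal := mul_le_mul_of_nonneg_left hKge hU0
    have e3 : U * (volume K).toReal ≤ U * ((T.card:ℝ) * h^n) := mul_le_mul_of_nonneg_left hsum_le hU0
    have e4 : U * ((1-ε)*V) = α * V := by rw [← e1]; ring
    have e5 : U * ((T.card:ℝ)*h^n) = (T.card:ℝ)*(U*h^n) := by ring
    linarith
  -- pick the two cubes and slide between them
  obtain ⟨k1, hk1T, hk1⟩ := claimA
  obtain ⟨k2, hk2T, hk2⟩ := claimB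
  have hk1Λ : Q k1 ⊆ Λ := hQsub k1 hk1T
  have hk2Λ : Q k2 ⊆ Λ := hQsub k2 hk2T
  set d : Fin n → ℝ := fun i => h * (k2 i : ℝ) - h * (k1 i : ℝ) with hd_def
  set F : ℝ → ℝ :=
    fun s => (volume (E ∩ cube n (fun i => h * (k1 i : ℝ) + s * d i) h)).toReal with hF_def
  have hFcont : Continuous F := continuous_cube_density n E hEfin' (fun i => h * (k1 i : ℝ)) d hh0
  have hpath : ∀ s, 0 ≤ s → s ≤ 1 → cube n (fun i => h * (k1 i : ℝ) + s * d i) h ⊆ Λ := by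
    intro s hs0 hs1 z hz
    have hp1 : (fun i => h * (k1 i : ℝ) + (z i - (h * (k1 i : ℝ) + s * d i))) ∈ Q k1 := by
      intro i
      have h1 := hz i
      simp only [Set.mem_Icc] at h1
      dsimp only at h1 ⊢
      exact ⟨by linarith [h1.1], by linarith [h1.2]⟩
    have hp2 : (fun i => h * (k2 i : ℝ) + (z i - (h * (k1 i : ℝ) + s * d i))) ∈ Q k2 := by
      intro i
      have h1 := hz i
      simp only [Set.mem_Icc] at h1
      dsimp only at h1 ⊢
      exact ⟨by linarith [h1.1], by linarith [h1.2]⟩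
    have hcomb := hconv (hk1Λ hp1) (hk2Λ hp2) (by linarith : (0:ℝ) ≤ 1 - s) hs0 (by ring)
    have hz' : z = (1-s) • (fun i => h * (k1 i : ℝ) + (z i - (h * (k1 i : ℝ) + s * d i)))
        + s • (fun i => h * (k2 i : ℝ) + (z i - (h * (k1 i : ℝ) + s * d i))) := by
      funext i
      simp only [Pi.add_apply, Pi.smul_apply, smul_eq_mul, hd_def]
      ring
    rw [hz']
    exact hcomb
  have hF0 : F 0 = (volume (E ∩ Q k1)).toReal := by
    have he : (fun i => h * (k1 i : ℝ) + 0 * d i) = fun i => h * (k1 i : ℝ) := by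
      funext i; ring
    simp only [hF_def, he, hQ_def]
  have hF1 : F 1 = (volume (E ∩ Q k2)).toReal := by
    have he : (fun i => h * (k1 i : ℝ) + 1 * d i) = fun i => h * (k2 i : ℝ) := by
      funext i; simp only [hd_def]; ring
    simp only [hF_def, he, hQ_def]
  have hvolc : ∀ x0 : Fin n → ℝ, (volume (cube n x0 h)).toReal = h ^ n :=
    fun x0 => volume_cube_toReal n x0 (le_of_lt hh0)
  have hcC : (1 / (4*(n:ℝ)))^n * ε ^ n = h ^ n := by
    rw [← mul_pow]
    congr 1
    rw [hh_def]; ring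
  by_cases hcase : F 0 ≤ α/(1-ε) * h ^ n
  · refine ⟨(fun i => h * (k1 i : ℝ)), h, hh0, ?_, ?_, ?_, ?_, ?_⟩
    · have := hk1Λ; simp only [hQ_def] at this; exact this
    · rw [hvolc, hcC]
    · rw [hvolc, hcC]
    · rw [hvolc]
      have := hk1; simp only [hQ_def] at this; exact this
    · rw [hvolc]
      rw [hF0] at hcase
      have := hcase; simp only [hQ_def] at this; exact this
  · push_neg at hcase
    have hF1le : F 1 ≤ α/(1-ε) * h ^ n := by rw [hF1]; exact hk2
    have hmem : α/(1-ε) * h ^ n ∈ Set.Icc (F 1) (F 0) := ⟨hF1le, le_of_lt hcase⟩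
    obtain ⟨s, hs, hFs⟩ := intermediate_value_Icc' zero_le_one hFcont.continuousOn hmem
    simp only [hF_def] at hFs
    have hLU : (α-ε)/(1-ε) * h^n ≤ α/(1-ε) * h^n := by
      apply mul_le_mul_of_nonneg_right _ (pow_nonneg (le_of_lt hh0) n)
      exact (div_le_div_iff_of_pos_right (by linarith)).mpr (by linarith)
    refine ⟨(fun i => h * (k1 i : ℝ) + s * d i), h, hh0, hpath s hs.1 hs.2, ?_, ?_, ?_, ?_⟩
    · rw [hvolc, hcC]
    · rw [hvolc, hcC]
    · rw [hvolc, hFs]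
      exact hLU
    · rw [hvolc, hFs]
end

section
/- Let $B$ be the unit ball in $\mathbb{R}^n$, $\alpha \in (0,1)$, $0 < \epsilon < \min(\alpha, 1-\alpha)$, and let $E \subseteq \mathbb{R}^n$ be measurable with $|E \cap B|/|B| = \alpha$. Then there exists a cube $R \subseteq B$ with $|R| \sim_n \epsilon^n$ such that $\frac{\alpha - \epsilon}{1 - \epsilon} \le \frac{|E \cap R|}{|R|} \le \frac{\alpha}{1 - \epsilon}$. -/
open MeasureTheory Set Metric

/-- The axes-parallel closed cube in Euclidean space with lower corner `x0` and sidelength `h`. -/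
def cubeE (n : ℕ) (x0 : Fin n → ℝ) (h : ℝ) : Set (EuclideanSpace ℝ (Fin n)) :=
  {y | ∀ i, y i ∈ Set.Icc (x0 i) (x0 i + h)}

lemma measurableSet_boxE (n : ℕ) (a b : Fin n → ℝ) :
    MeasurableSet {y : EuclideanSpace ℝ (Fin n) | ∀ i, y i ∈ Set.Icc (a i) (b i)} := by
  have : {y : EuclideanSpace ℝ (Fin n) | ∀ i, y i ∈ Set.Icc (a i) (b i)} =
      ⋂ i, (fun y : EuclideanSpace ℝ (Fin n) => y i) ⁻¹' Set.Icc (a i) (b i) := by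
    ext y; simp
  rw [this]
  exact MeasurableSet.iInter fun i =>
    ((EuclideanSpace.proj i).continuous.measurable) measurableSet_Icc

lemma volume_boxE (n : ℕ) (a b : Fin n → ℝ) :
    volume {y : EuclideanSpace ℝ (Fin n) | ∀ i, y i ∈ Set.Icc (a i) (b i)} =
      ∏ i, ENNReal.ofReal (b i - a i) := by
  have he : {y : EuclideanSpace ℝ (Fin n) | ∀ i, y i ∈ Set.Icc (a i) (b i)} =
      (MeasurableEquiv.toLp 2 (Fin n → ℝ)).symm ⁻¹' (Set.univ.pi fun i => Set.Icc (a i) (b i)) := by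
    ext y
    simp [MeasurableEquiv.coe_toLp_symm, Set.mem_pi, Pi.le_def, forall_and]
  rw [he, (EuclideanSpace.volume_preserving_symm_measurableEquiv_toLp (Fin n)).measure_preimage
    ((MeasurableSet.univ_pi fun i => measurableSet_Icc).nullMeasurableSet),
    volume_pi_pi]
  simp [Real.volume_Icc]

lemma measurableSet_cubeE (n : ℕ) (x0 : Fin n → ℝ) (h : ℝ) : MeasurableSet (cubeE n x0 h) :=
  measurableSet_boxE n x0 (fun i => x0 i + h)

lemma volume_cubeE (n : ℕ) (x0 : Fin n → ℝ) {h : ℝ} (hh : 0 ≤ h) :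
    volume (cubeE n x0 h) = ENNReal.ofReal (h ^ n) := by
  rw [cubeE, volume_boxE]
  simp [ENNReal.ofReal_pow hh]

lemma cubeE_inter (n : ℕ) (x x' : Fin n → ℝ) (h : ℝ) :
    cubeE n x h ∩ cubeE n x' h =
      {y : EuclideanSpace ℝ (Fin n) |
        ∀ i, y i ∈ Set.Icc (max (x i) (x' i)) (min (x i) (x' i) + h)} := by
  ext y
  simp only [cubeE, Set.mem_inter_iff, Set.mem_setOf_eq, Set.mem_Icc, ← forall_and]
  refine forall_congr' fun i => ?_
  constructor
  · rintro ⟨⟨h1, h2⟩, h3, h4⟩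
    refine ⟨max_le h1 h3, ?_⟩
    rcases le_total (x i) (x' i) with hc | hc
    · rw [min_eq_left hc]; linarith
    · rw [min_eq_right hc]; linarith
  · rintro ⟨h1, h2⟩
    have hx := le_max_left (x i) (x' i)
    have hx' := le_max_right (x i) (x' i)
    have hm := min_le_left (x i) (x' i)
    have hm' := min_le_right (x i) (x' i)
    exact ⟨⟨hx.trans h1, h2.trans (by linarith)⟩, hx'.trans h1, h2.trans (by linarith)⟩

lemma lintegral_vol_inter_cubeE (n : ℕ) {W : Set (EuclideanSpace ℝ (Fin n))}
    (hW : MeasurableSet W) {h : ℝ} (hh : 0 ≤ h) :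
    ∫⁻ x : EuclideanSpace ℝ (Fin n), volume (W ∩ cubeE n x h) =
      ENNReal.ofReal (h ^ n) * volume W := by
  set T : Set (EuclideanSpace ℝ (Fin n) × EuclideanSpace ℝ (Fin n)) :=
    {p | p.2 ∈ W ∧ ∀ i, p.2 i ∈ Set.Icc (p.1 i) (p.1 i + h)} with hT_def
  have hT : MeasurableSet T := by
    have h1 : MeasurableSet {p : EuclideanSpace ℝ (Fin n) × EuclideanSpace ℝ (Fin n) | p.2 ∈ W} :=
      measurable_snd hW
    have h2 : ∀ i, MeasurableSet {p : EuclideanSpace ℝ (Fin n) × EuclideanSpace ℝ (Fin n) |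
        p.2 i ∈ Set.Icc (p.1 i) (p.1 i + h)} := by
      intro i
      have hm1 : Measurable fun p : EuclideanSpace ℝ (Fin n) × EuclideanSpace ℝ (Fin n) => p.1 i :=
        ((EuclideanSpace.proj i).continuous.measurable).comp measurable_fst
      have hm2 : Measurable fun p : EuclideanSpace ℝ (Fin n) × EuclideanSpace ℝ (Fin n) => p.2 i :=
        ((EuclideanSpace.proj i).continuous.measurable).comp measurable_snd
      have : {p : EuclideanSpace ℝ (Fin n) × EuclideanSpace ℝ (Fin n) |
          p.2 i ∈ Set.Icc (p.1 i) (p.1 i + h)} =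
          {p | p.1 i ≤ p.2 i} ∩ {p | p.2 i ≤ p.1 i + h} := by
        ext p; simp [Set.mem_Icc]
      rw [this]
      exact (measurableSet_le hm1 hm2).inter (measurableSet_le hm2 (hm1.add_const h))
    have hTe : T = {p | p.2 ∈ W} ∩
        ⋂ i, {p : EuclideanSpace ℝ (Fin n) × EuclideanSpace ℝ (Fin n) |
          p.2 i ∈ Set.Icc (p.1 i) (p.1 i + h)} := by
      ext p; simp [hT_def]
    rw [hTe]; exact h1.inter (MeasurableSet.iInter h2)
  have e1 : (volume.prod volume) T =
      ∫⁻ x : EuclideanSpace ℝ (Fin n), volume (W ∩ cubeE n x h) := by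
    rw [Measure.prod_apply hT]
    refine lintegral_congr fun x => ?_
    have hs : Prod.mk x ⁻¹' T = W ∩ cubeE n x h := by ext y; simp [hT_def, cubeE]
    rw [hs]
  have e2 : (volume.prod volume) T = ENNReal.ofReal (h ^ n) * volume W := by
    rw [Measure.prod_apply_symm hT]
    have key : ∀ y : EuclideanSpace ℝ (Fin n),
        volume ((fun x => (x, y)) ⁻¹' T) = W.indicator (fun _ => ENNReal.ofReal (h ^ n)) y := by
      intro y
      by_cases hy : y ∈ W
      · have hset : (fun x => (x, y)) ⁻¹' T =
            {x : EuclideanSpace ℝ (Fin n) | ∀ i, x i ∈ Set.Icc (y i - h) (y i)} := by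
          ext x
          simp only [hT_def, Set.mem_preimage, Set.mem_setOf_eq, hy, true_and, Set.mem_Icc]
          constructor
          · intro hx i; have := hx i; constructor <;> linarith [this.1, this.2]
          · intro hx i; have := hx i; constructor <;> linarith [this.1, this.2]
        rw [hset, volume_boxE]
        simp [hy, Finset.prod_const, ENNReal.ofReal_pow hh]
      · have hset : (fun x => (x, y)) ⁻¹' T = ∅ := by
          ext x; simp [hT_def, hy]
        rw [hset]
        simp [hy]
    rw [lintegral_congr key, lintegral_indicator hW]
    exact setLIntegral_const W _
  rw [← e1, e2]

lemma toReal_volume_cubeE_inter (n : ℕ) (x x' : Fin n → ℝ) (h : ℝ) :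
    (volume (cubeE n x h ∩ cubeE n x' h)).toReal =
      ∏ i, max (min (x i) (x' i) + h - max (x i) (x' i)) 0 := by
  rw [cubeE_inter, volume_boxE, ENNReal.toReal_prod]
  exact Finset.prod_congr rfl fun i _ => ENNReal.toReal_ofReal'

lemma vol_inter_cubeE_sub_le (n : ℕ) {E : Set (EuclideanSpace ℝ (Fin n))}
    {h : ℝ} (hh : 0 ≤ h) (x x' : Fin n → ℝ) :
    (volume (E ∩ cubeE n x' h)).toReal ≤ (volume (E ∩ cubeE n x h)).toReal +
      (h ^ n - ∏ i, max (min (x i) (x' i) + h - max (x i) (x' i)) 0) := by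
  have hQ := measurableSet_cubeE n x h
  have hfin : ∀ (z : Fin n → ℝ) (S : Set (EuclideanSpace ℝ (Fin n))),
      volume (S ∩ cubeE n z h) ≠ ⊤ := by
    intro z S
    exact ne_top_of_le_ne_top (by simp [volume_cubeE n z hh]) (measure_mono inter_subset_right)
  have key : volume (E ∩ cubeE n x' h) + volume (cubeE n x' h ∩ cubeE n x h) ≤
      volume (E ∩ cubeE n x h) + volume (cubeE n x' h) := by
    have h1 : volume (E ∩ cubeE n x' h) ≤
        volume (E ∩ cubeE n x h) + volume (cubeE n x' h \ cubeE n x h) := by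
      refine le_trans (measure_mono ?_) (measure_union_le _ _)
      intro y hy
      by_cases hyq : y ∈ cubeE n x h
      · exact Or.inl ⟨hy.1, hyq⟩
      · exact Or.inr ⟨hy.2, hyq⟩
    calc volume (E ∩ cubeE n x' h) + volume (cubeE n x' h ∩ cubeE n x h)
        ≤ (volume (E ∩ cubeE n x h) + volume (cubeE n x' h \ cubeE n x h)) +
          volume (cubeE n x' h ∩ cubeE n x h) := by gcongr
      _ = volume (E ∩ cubeE n x h) +
          (volume (cubeE n x' h ∩ cubeE n x h) + volume (cubeE n x' h \ cubeE n x h)) := by ring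
      _ = volume (E ∩ cubeE n x h) + volume (cubeE n x' h) := by
          rw [measure_inter_add_diff _ hQ]
  have hfin2 : volume (cubeE n x' h ∩ cubeE n x h) ≠ ⊤ :=
    ne_top_of_le_ne_top (by simp [volume_cubeE n x' hh]) (measure_mono inter_subset_left)
  have hfin3 : volume (cubeE n x' h) ≠ ⊤ := by simp [volume_cubeE n x' hh]
  have key2 : (volume (E ∩ cubeE n x' h)).toReal +
      (volume (cubeE n x' h ∩ cubeE n x h)).toReal ≤
      (volume (E ∩ cubeE n x h)).toReal + (volume (cubeE n x' h)).toReal := by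
    rw [← ENNReal.toReal_add (hfin x' E) hfin2, ← ENNReal.toReal_add (hfin x E) hfin3]
    exact ENNReal.toReal_mono (by exact ENNReal.add_ne_top.2 ⟨hfin x E, hfin3⟩) key
  have hm : (volume (cubeE n x' h ∩ cubeE n x h)).toReal =
      ∏ i, max (min (x i) (x' i) + h - max (x i) (x' i)) 0 := by
    rw [inter_comm]; exact toReal_volume_cubeE_inter n x x' h
  have hq' : (volume (cubeE n x' h)).toReal = h ^ n := by
    rw [volume_cubeE n x' hh, ENNReal.toReal_ofReal (pow_nonneg hh n)]
  rw [hm, hq'] at key2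
  linarith

lemma continuous_toReal_vol_inter_cubeE (n : ℕ) (E : Set (EuclideanSpace ℝ (Fin n)))
    {h : ℝ} (hh : 0 ≤ h) :
    Continuous fun x : EuclideanSpace ℝ (Fin n) => (volume (E ∩ cubeE n x h)).toReal := by
  rw [continuous_iff_continuousAt]
  intro x
  set g := fun x : EuclideanSpace ℝ (Fin n) => (volume (E ∩ cubeE n x h)).toReal with hg
  have hφcont : Continuous fun x' : EuclideanSpace ℝ (Fin n) =>
      ∏ i, max (min (x i) (x' i) + h - max (x i) (x' i)) 0 := by
    refine continuous_finset_prod _ fun i _ => ?_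
    have hproj : Continuous fun x' : EuclideanSpace ℝ (Fin n) => x' i :=
      (EuclideanSpace.proj i).continuous
    exact (((continuous_const.min hproj).add continuous_const).sub
      (continuous_const.max hproj)).max continuous_const
  have hφx : (∏ i, max (min (x i) (x i) + h - max (x i) (x i)) 0) = h ^ n := by
    have : ∀ i : Fin n, max (min (x i) (x i) + h - max (x i) (x i)) 0 = h := by
      intro i; simp [max_eq_left hh]
    simp [this, max_eq_left hh]
  have hbound : ∀ x' : EuclideanSpace ℝ (Fin n), dist (g x') (g x) ≤
      h ^ n - ∏ i, max (min (x i) (x' i) + h - max (x i) (x' i)) 0 := by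
    intro x'
    rw [Real.dist_eq, abs_sub_le_iff]
    constructor
    · have := vol_inter_cubeE_sub_le n (E := E) hh x x'
      simp only [← hg] at this; linarith
    · have := vol_inter_cubeE_sub_le n (E := E) hh x' x
      have hsymm : (∏ i, max (min (x' i) (x i) + h - max (x' i) (x i)) 0) =
          ∏ i, max (min (x i) (x' i) + h - max (x i) (x' i)) 0 :=
        Finset.prod_congr rfl fun i _ => by rw [min_comm (x' i) (x i), max_comm (x' i) (x i)]
      rw [hsymm] at this
      simp only [← hg] at this; linarith
  rw [ContinuousAt, tendsto_iff_dist_tendsto_zero]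
  have htends : Filter.Tendsto
      (fun x' : EuclideanSpace ℝ (Fin n) =>
        h ^ n - ∏ i, max (min (x i) (x' i) + h - max (x i) (x' i)) 0) (nhds x) (nhds 0) := by
    have := ((continuous_const (y := h ^ n)).sub hφcont).tendsto x
    simp only [Pi.sub_apply, hφx, sub_self] at this; exact this
  exact squeeze_zero (fun t => dist_nonneg) hbound htends

lemma cubeE_subset_ball (n : ℕ) {h : ℝ} (hh : 0 ≤ h) (x : EuclideanSpace ℝ (Fin n))
    (hx : ‖x‖ < 1 - h * Real.sqrt n) :
    cubeE n x h ⊆ Metric.ball (0 : EuclideanSpace ℝ (Fin n)) 1 := by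
  intro z hz
  have hdist : dist z x ≤ h * Real.sqrt n := by
    rw [EuclideanSpace.dist_eq]
    have hb : (∑ i, dist (z i) (x i) ^ 2) ≤ ∑ _i : Fin n, h ^ 2 := by
      refine Finset.sum_le_sum fun i _ => ?_
      have h1 := (hz i).1
      have h2 := (hz i).2
      have : |z i - x i| ≤ h := by
        rw [abs_le]; constructor <;> simp at h1 h2 <;> [linarith; linarith]
      have habs : dist (z i) (x i) ≤ h := by rwa [Real.dist_eq]
      exact pow_le_pow_left₀ dist_nonneg habs 2
    calc Real.sqrt (∑ i, dist (z i) (x i) ^ 2) ≤ Real.sqrt (∑ _i : Fin n, h ^ 2) :=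
          Real.sqrt_le_sqrt hb
      _ = h * Real.sqrt n := by
          rw [Finset.sum_const, Finset.card_univ, Fintype.card_fin, nsmul_eq_mul,
            Real.sqrt_mul (by positivity), Real.sqrt_sq hh, mul_comm]
  have : ‖z‖ ≤ ‖x‖ + h * Real.sqrt n := by
    have ht := dist_triangle z x 0
    rw [dist_zero_right, dist_zero_right] at ht
    linarith
  simp only [Metric.mem_ball, dist_zero_right]
  linarith

lemma convex_cubeParams (n : ℕ) (h : ℝ) :
    Convex ℝ {x : EuclideanSpace ℝ (Fin n) |
      cubeE n x h ⊆ Metric.ball (0 : EuclideanSpace ℝ (Fin n)) 1} := by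
  intro x hx x' hx' a b ha hb hab
  intro z hz
  set c : EuclideanSpace ℝ (Fin n) := a • x + b • x' with hc
  have hcoord : ∀ i, c i = a * x i + b * x' i := by
    intro i; simp [hc]
  set z1 : EuclideanSpace ℝ (Fin n) := z - c + x with hz1
  set z2 : EuclideanSpace ℝ (Fin n) := z - c + x' with hz2
  have hz1mem : z1 ∈ cubeE n x h := by
    intro i
    have := hz i
    simp only [Set.mem_Icc] at this ⊢
    have e : z1 i = z i - c i + x i := by simp [hz1]
    rw [e]; constructor <;> linarith [this.1, this.2]
  have hz2mem : z2 ∈ cubeE n x' h := by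
    intro i
    have := hz i
    simp only [Set.mem_Icc] at this ⊢
    have e : z2 i = z i - c i + x' i := by simp [hz2]
    rw [e]; constructor <;> linarith [this.1, this.2]
  have hrepr : z = a • z1 + b • z2 := by
    have hb1 : b = 1 - a := by linarith
    subst hb1
    rw [hz1, hz2, hc]
    match_scalars <;> ring
  rw [hrepr]
  exact convex_ball (0 : EuclideanSpace ℝ (Fin n)) 1 (hx hz1mem) (hx' hz2mem) ha hb hab

set_option maxHeartbeats 2000000 in
/-- If `B` is the unit ball in `ℝⁿ`, `E` is measurable with `|E ∩ B|/|B| = α ∈ (0,1)`, and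
`0 < ε < min(α, 1-α)`, then there is a cube `R ⊆ B` with `|R| ∼_n εⁿ` whose `E`-density lies
between `(α-ε)/(1-ε)` and `α/(1-ε)`. -/
theorem exists_cube_of_intermediate_density_ball (n : ℕ) (hn : 0 < n) :
    ∃ c C : ℝ, 0 < c ∧ 0 < C ∧
      ∀ (α ε : ℝ) (E : Set (EuclideanSpace ℝ (Fin n))),
        α ∈ Set.Ioo (0 : ℝ) 1 → 0 < ε → ε < min α (1 - α) →
        MeasurableSet E →
        (volume (E ∩ Metric.ball (0 : EuclideanSpace ℝ (Fin n)) 1)).toReal =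
          α * (volume (Metric.ball (0 : EuclideanSpace ℝ (Fin n)) 1)).toReal →
        ∃ (x0 : Fin n → ℝ) (h : ℝ), 0 < h ∧
          cubeE n x0 h ⊆ Metric.ball (0 : EuclideanSpace ℝ (Fin n)) 1 ∧
          c * ε ^ n ≤ (volume (cubeE n x0 h)).toReal ∧
          (volume (cubeE n x0 h)).toReal ≤ C * ε ^ n ∧
          (α - ε) / (1 - ε) * (volume (cubeE n x0 h)).toReal ≤
            (volume (E ∩ cubeE n x0 h)).toReal ∧
          (volume (E ∩ cubeE n x0 h)).toReal ≤
            α / (1 - ε) * (volume (cubeE n x0 h)).toReal := by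
  have hn' : (0 : ℝ) < n := by exact_mod_cast hn
  have hn1 : (1 : ℝ) ≤ n := by exact_mod_cast hn
  set s : ℝ := 2 * n * Real.sqrt n with hs_def
  have hsqrt : 0 < Real.sqrt n := Real.sqrt_pos.2 hn'
  have hs : 0 < s := by positivity
  refine ⟨(1 / s) ^ n, (1 / s) ^ n, by positivity, by positivity, ?_⟩
  intro α ε E hα hε hεmin hE hvol
  obtain ⟨hα0, hα1⟩ := hα
  obtain ⟨hεα, hε1α⟩ := lt_min_iff.1 hεmin
  have hε1 : ε < 1 := by linarith
  set h : ℝ := ε / s with hh_def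
  have hh : 0 < h := by positivity
  set δ : ℝ := h * Real.sqrt n with hδ_def
  have hδval : δ * (2 * n) = ε := by
    rw [hδ_def, hh_def, hs_def]
    field_simp
  have hδpos : 0 < δ := by positivity
  have hδlt : δ < 1 := by nlinarith
  set B := Metric.ball (0 : EuclideanSpace ℝ (Fin n)) 1 with hB
  set A := {x : EuclideanSpace ℝ (Fin n) | cubeE n x h ⊆ B} with hA
  have hBfin : volume B ≠ ⊤ := measure_ball_lt_top.ne
  set bT := (volume B).toReal with hbT
  have hbT0 : 0 < bT := by
    rw [hbT]
    exact ENNReal.toReal_pos (measure_ball_pos volume _ one_pos).ne' hBfin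
  -- the set of admissible corners
  have hAball : Metric.ball (0 : EuclideanSpace ℝ (Fin n)) (1 - δ) ⊆ A := by
    intro x hx
    rw [Metric.mem_ball, dist_zero_right] at hx
    exact cubeE_subset_ball n hh.le x (by rw [hδ_def] at hx; exact hx)
  have hconv : Convex ℝ A := convex_cubeParams n h
  have hAnull : NullMeasurableSet A volume :=
    hconv.nullMeasurableSet (volume : Measure (EuclideanSpace ℝ (Fin n)))
  have hAvol : ENNReal.ofReal ((1 - δ) ^ n * bT) ≤ volume A := by
    have hball := Measure.addHaar_ball_of_pos (volume : Measure (EuclideanSpace ℝ (Fin n)))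
      (0 : EuclideanSpace ℝ (Fin n)) (by linarith : (0:ℝ) < 1 - δ)
    rw [finrank_euclideanSpace_fin, ← hB] at hball
    calc ENNReal.ofReal ((1 - δ) ^ n * bT)
        = ENNReal.ofReal ((1 - δ) ^ n) * ENNReal.ofReal bT := by
          rw [← ENNReal.ofReal_mul (pow_nonneg (by linarith : (0:ℝ) ≤ 1 - δ) n)]
      _ = ENNReal.ofReal ((1 - δ) ^ n) * volume B := by
          rw [hbT, ENNReal.ofReal_toReal hBfin]
      _ = volume (Metric.ball (0 : EuclideanSpace ℝ (Fin n)) (1 - δ)) := hball.symm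
      _ ≤ volume A := measure_mono hAball
  have hEBfin : volume (E ∩ B) ≠ ⊤ :=
    ne_top_of_le_ne_top hBfin (measure_mono inter_subset_right)
  have hEB : volume (E ∩ B) = ENNReal.ofReal (α * bT) := by
    rw [← hvol, ENNReal.ofReal_toReal hEBfin]
  -- the key averaged bound
  have keychain : ∀ (W : Set (EuclideanSpace ℝ (Fin n))), MeasurableSet W → volume W ≠ ⊤ →
      ∀ t : ℝ, 0 ≤ t →
      (∀ x ∈ A, ENNReal.ofReal (t * h ^ n) ≤ volume (W ∩ cubeE n x h)) →
      t * h ^ n * ((1 - δ) ^ n * bT) ≤ h ^ n * (volume W).toReal := by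
    intro W hW hWfin t ht hpt
    have main : ENNReal.ofReal (t * h ^ n * ((1 - δ) ^ n * bT)) ≤
        ENNReal.ofReal (h ^ n * (volume W).toReal) := by
      calc ENNReal.ofReal (t * h ^ n * ((1 - δ) ^ n * bT))
          = ENNReal.ofReal (t * h ^ n) * ENNReal.ofReal ((1 - δ) ^ n * bT) := by
            rw [← ENNReal.ofReal_mul (by positivity)]
        _ ≤ ENNReal.ofReal (t * h ^ n) * volume A := by gcongr
        _ = ∫⁻ _ in A, ENNReal.ofReal (t * h ^ n) := (setLIntegral_const A _).symm
        _ ≤ ∫⁻ x in A, volume (W ∩ cubeE n x h) := by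
            refine lintegral_mono_ae ?_
            exact (ae_restrict_mem₀ hAnull).mono fun x hx => hpt x hx
        _ ≤ ∫⁻ x : EuclideanSpace ℝ (Fin n), volume (W ∩ cubeE n x h) :=
            setLIntegral_le_lintegral _ _
        _ = ENNReal.ofReal (h ^ n) * volume W := lintegral_vol_inter_cubeE n hW hh.le
        _ = ENNReal.ofReal (h ^ n * (volume W).toReal) := by
            rw [ENNReal.ofReal_mul (by positivity), ENNReal.ofReal_toReal hWfin]
    exact (ENNReal.ofReal_le_ofReal_iff (by positivity)).1 main
  -- Bernoulli
  have hBern : 1 - ε / 2 ≤ (1 - δ) ^ n := by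
    have h0 := one_add_mul_le_pow (a := -δ) (by linarith) n
    have hnδ : (n : ℝ) * δ = ε / 2 := by nlinarith [hδval]
    have he : (1 + -δ : ℝ) = 1 - δ := by ring
    rw [he, mul_neg] at h0
    linarith
  -- the numerical contradiction template
  have hnum : ∀ T β : ℝ, 0 < T → T * (1 - ε) = β →
      T * h ^ n * ((1 - δ) ^ n * bT) ≤ h ^ n * (β * bT) → False := by
    intro T β hT hTβ hineq
    have hp : 0 < h ^ n * bT := by positivity
    have h2 : T * (1 - ε / 2) * (h ^ n * bT) ≤ T * (1 - δ) ^ n * (h ^ n * bT) := by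
      have := mul_le_mul_of_nonneg_left hBern hT.le
      exact mul_le_mul_of_nonneg_right this hp.le
    have h3 : T * (1 - δ) ^ n * (h ^ n * bT) ≤ β * (h ^ n * bT) := by
      calc T * (1 - δ) ^ n * (h ^ n * bT) = T * h ^ n * ((1 - δ) ^ n * bT) := by ring
        _ ≤ h ^ n * (β * bT) := hineq
        _ = β * (h ^ n * bT) := by ring
    have h4 : T * (1 - ε / 2) ≤ β := le_of_mul_le_mul_right (h2.trans h3) hp
    nlinarith
  set L : ℝ := (α - ε) / (1 - ε) with hL_def
  set R : ℝ := α / (1 - ε) with hR_def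
  have h1ε : (0 : ℝ) < 1 - ε := by linarith
  have hLe : L * (1 - ε) = α - ε := by rw [hL_def]; field_simp
  have hRe : R * (1 - ε) = α := by rw [hR_def]; field_simp
  have hR0 : 0 < R := div_pos hα0 h1ε
  have hL1 : L < 1 := by rw [hL_def, div_lt_one h1ε]; linarith
  have hLR : L ≤ R := by
    rw [hL_def, hR_def, div_le_div_iff₀ h1ε h1ε]
    nlinarith
  set g := fun x : EuclideanSpace ℝ (Fin n) => (volume (E ∩ cubeE n x h)).toReal with hg_def
  have hgcont : Continuous g := continuous_toReal_vol_inter_cubeE n E hh.le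
  have hQfin : ∀ x : Fin n → ℝ, volume (cubeE n x h) ≠ ⊤ := by
    intro x; simp [volume_cubeE n x hh.le]
  have hEQfin : ∀ x : Fin n → ℝ, volume (E ∩ cubeE n x h) ≠ ⊤ := fun x =>
    ne_top_of_le_ne_top (hQfin x) (measure_mono inter_subset_right)
  -- main claim
  have claim : ∃ x : EuclideanSpace ℝ (Fin n), x ∈ A ∧
      L * h ^ n ≤ g x ∧ g x ≤ R * h ^ n := by
    by_contra hno
    push_neg at hno
    set u := {x : EuclideanSpace ℝ (Fin n) | g x < L * h ^ n} with hu_def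
    set v := {x : EuclideanSpace ℝ (Fin n) | R * h ^ n < g x} with hv_def
    have hu : IsOpen u := isOpen_lt hgcont continuous_const
    have hv : IsOpen v := isOpen_lt continuous_const hgcont
    have hsub : A ⊆ u ∪ v := by
      intro x hxA
      by_cases hlow : g x < L * h ^ n
      · exact Or.inl hlow
      · exact Or.inr (hno x hxA (not_lt.1 hlow))
    have hmulLR : L * h ^ n ≤ R * h ^ n := mul_le_mul_of_nonneg_right hLR (pow_nonneg hh.le n)
    have hdisj : A ∩ (u ∩ v) = ∅ := by
      ext x
      simp only [Set.mem_inter_iff, Set.mem_empty_iff_false, iff_false, not_and,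
        hu_def, hv_def, Set.mem_setOf_eq]
      intro _ h1 h2
      linarith
    have hApre : IsPreconnected A := hconv.isPreconnected
    have hA0 : (0 : EuclideanSpace ℝ (Fin n)) ∈ A :=
      hAball (Metric.mem_ball_self (by linarith))
    -- one of the two pieces must be empty
    have hcases : A ∩ u = ∅ ∨ A ∩ v = ∅ := by
      by_contra hboth
      push_neg at hboth
      obtain ⟨hu_ne, hv_ne⟩ := hboth
      obtain ⟨w, hw⟩ := hApre u v hu hv hsub hu_ne hv_ne
      rw [hdisj] at hw
      exact hw
    rcases hcases with hcase | hcase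
    · -- g is everywhere > R * h^n on A
      have hhigh : ∀ x ∈ A, R * h ^ n < g x := by
        intro x hxA
        have hxu : x ∉ u := fun hxu => by
          have : x ∈ A ∩ u := ⟨hxA, hxu⟩
          rw [hcase] at this; exact this
        rw [hu_def, Set.mem_setOf_eq] at hxu
        exact hno x hxA (not_lt.1 hxu)
      have hpt : ∀ x ∈ A, ENNReal.ofReal (R * h ^ n) ≤ volume ((E ∩ B) ∩ cubeE n x h) := by
        intro x hxA
        have hQsub : cubeE n x h ⊆ B := hxA
        have heq : (E ∩ B) ∩ cubeE n x h = E ∩ cubeE n x h := by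
          rw [Set.inter_assoc, Set.inter_eq_self_of_subset_right hQsub]
        rw [heq]
        calc ENNReal.ofReal (R * h ^ n) ≤ ENNReal.ofReal (g x) :=
              ENNReal.ofReal_le_ofReal (hhigh x hxA).le
          _ = volume (E ∩ cubeE n x h) := ENNReal.ofReal_toReal (hEQfin x)
      have := keychain (E ∩ B) (hE.inter measurableSet_ball) hEBfin R hR0.le hpt
      rw [hvol] at this
      exact hnum R α hR0 hRe this
    · -- g is everywhere < L * h^n on A
      have hlow : ∀ x ∈ A, g x < L * h ^ n := by
        intro x hxA
        have hxv : x ∉ v := fun hxv => by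
          have : x ∈ A ∩ v := ⟨hxA, hxv⟩
          rw [hcase] at this; exact this
        rcases hsub hxA with hxu | hxv'
        · exact hxu
        · exact absurd hxv' hxv
      have hBEfin : volume (B \ E) ≠ ⊤ :=
        ne_top_of_le_ne_top hBfin (measure_mono diff_subset)
      have hBEvol : (volume (B \ E)).toReal = (1 - α) * bT := by
        have hsum := measure_inter_add_diff (μ := volume) B hE
        have h1 : volume (B ∩ E) = volume (E ∩ B) := by rw [inter_comm]
        rw [h1, hEB] at hsum
        have := congrArg ENNReal.toReal hsum
        rw [ENNReal.toReal_add (by simp) hBEfin, ENNReal.toReal_ofReal (by positivity)] at this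
        rw [← hbT] at this
        linarith
      have hpt : ∀ x ∈ A, ENNReal.ofReal ((1 - L) * h ^ n) ≤
          volume ((B \ E) ∩ cubeE n x h) := by
        intro x hxA
        have hQsub : cubeE n x h ⊆ B := hxA
        have heq : (B \ E) ∩ cubeE n x h = cubeE n x h \ E := by
          ext y
          constructor
          · rintro ⟨⟨_, hyE⟩, hyQ⟩; exact ⟨hyQ, hyE⟩
          · rintro ⟨hyQ, hyE⟩; exact ⟨⟨hQsub hyQ, hyE⟩, hyQ⟩
        rw [heq]
        have hsum := measure_inter_add_diff (μ := volume) (cubeE n x h) hE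
        have hQEfin : volume (cubeE n x h ∩ E) ≠ ⊤ :=
          ne_top_of_le_ne_top (hQfin x) (measure_mono inter_subset_left)
        have hQDfin : volume (cubeE n x h \ E) ≠ ⊤ :=
          ne_top_of_le_ne_top (hQfin x) (measure_mono diff_subset)
        have htr := congrArg ENNReal.toReal hsum
        rw [ENNReal.toReal_add hQEfin hQDfin] at htr
        have hQE : (volume (cubeE n x h ∩ E)).toReal = g x := by
          rw [inter_comm]
        have hQvol : (volume (cubeE n x h)).toReal = h ^ n := by
          rw [volume_cubeE n x hh.le, ENNReal.toReal_ofReal (by positivity)]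
        rw [hQE, hQvol] at htr
        have hgoal : (1 - L) * h ^ n ≤ (volume (cubeE n x h \ E)).toReal := by
          have := hlow x hxA
          linarith
        calc ENNReal.ofReal ((1 - L) * h ^ n) ≤
              ENNReal.ofReal ((volume (cubeE n x h \ E)).toReal) :=
              ENNReal.ofReal_le_ofReal hgoal
          _ = volume (cubeE n x h \ E) := ENNReal.ofReal_toReal hQDfin
      have h1L : 0 < 1 - L := by linarith
      have h1Le : (1 - L) * (1 - ε) = 1 - α := by linear_combination -hLe
      have := keychain (B \ E) (measurableSet_ball.diff hE) hBEfin (1 - L) h1L.le hpt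
      rw [hBEvol] at this
      exact hnum (1 - L) (1 - α) h1L h1Le this
  obtain ⟨x, hxA, hlow, hhigh⟩ := claim
  have hQvol : (volume (cubeE n x h)).toReal = h ^ n := by
    rw [volume_cubeE n x hh.le, ENNReal.toReal_ofReal (by positivity)]
  have hceq : (1 / s) ^ n * ε ^ n = h ^ n := by
    rw [hh_def, ← mul_pow, one_div, inv_mul_eq_div]
  exact ⟨x, h, hh, hxA, by rw [hQvol]; exact le_of_eq hceq,
    by rw [hQvol]; exact le_of_eq hceq.symm,
    by rw [hQvol]; exact hlow, by rw [hQvol]; exact hhigh⟩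
end

section
/- Let $f : (0,1) \to [1,\infty)$ be a continuous non-increasing function, $p \in (0,1)$, and suppose there exist $\alpha_0 \in (0,1)$, $A > 0$, and $c > 0$ such that: (a) $f(\alpha) - 1 \le A(1-\alpha)^p$ for all $\alpha \in (\alpha_0, 1)$; and (b) $f(x) \le f\big(x(1 + c\delta)\big) f(1-\delta)$ for all $x \in (0,1)$ and $\delta \in (0, 1-x)$ with $x(1+c\delta) < 1$. Then $f$ is locally Hölder continuous with exponent $p$ on $(0,1)$: for every compact $K \subset (0,1)$ there is a constant $C_K$ with $|f(x) - f(y)| \le C_K |x-y|^p$ for all $x, y \in K$. -/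
open Set

/-- If `f : (0,1) → [1,∞)` is continuous and non-increasing, satisfies the Solyanik estimate
`f(α) - 1 ≤ A(1-α)^p` near `1`, and the submultiplicativity `f(x) ≤ f(x(1+cδ)) f(1-δ)`, then
`f` is locally Hölder continuous with exponent `p` on `(0,1)`. -/
theorem local_holder_of_solyanik (f : ℝ → ℝ) (p : ℝ) (hp : p ∈ Set.Ioo (0 : ℝ) 1)
    (hcont : ContinuousOn f (Set.Ioo (0 : ℝ) 1))
    (hmono : ∀ x ∈ Set.Ioo (0 : ℝ) 1, ∀ y ∈ Set.Ioo (0 : ℝ) 1, x ≤ y → f y ≤ f x)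
    (hone : ∀ x ∈ Set.Ioo (0 : ℝ) 1, 1 ≤ f x)
    (α₀ A c : ℝ) (hα₀ : α₀ ∈ Set.Ioo (0 : ℝ) 1) (hA : 0 < A) (hc : 0 < c)
    (hsol : ∀ α ∈ Set.Ioo α₀ 1, f α - 1 ≤ A * (1 - α) ^ p)
    (hsub : ∀ x ∈ Set.Ioo (0 : ℝ) 1, ∀ δ : ℝ, 0 < δ → δ < 1 - x → x * (1 + c * δ) < 1 →
      f x ≤ f (x * (1 + c * δ)) * f (1 - δ)) :
    ∀ K ⊆ Set.Ioo (0 : ℝ) 1, IsCompact K →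
      ∃ C : ℝ, ∀ x ∈ K, ∀ y ∈ K, |f x - f y| ≤ C * |x - y| ^ p := by
  intro K hK hKc
  rcases K.eq_empty_or_nonempty with rfl | hne
  · exact ⟨0, by simp⟩
  obtain ⟨a, haK, haLe⟩ := hKc.exists_isLeast hne
  obtain ⟨b, hbK, hbGe⟩ := hKc.exists_isGreatest hne
  have ha1 : a ∈ Set.Ioo (0:ℝ) 1 := hK haK
  have hb1 : b ∈ Set.Ioo (0:ℝ) 1 := hK hbK
  set M := f a with hM
  have hM1 : 1 ≤ M := hone a ha1
  set m := min (1 - b) (1 - α₀) with hm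
  have hm0 : 0 < m := lt_min (by linarith [hb1.2]) (by linarith [hα₀.2])
  set ε := c * a * m / 2 with hεdef
  have hε0 : 0 < ε := by
    have := ha1.1
    positivity
  have hca : 0 < c * a := mul_pos hc ha1.1
  set C1 := M * A / (c * a) ^ p with hC1
  set C2 := M / ε ^ p with hC2
  have hC1nonneg : 0 ≤ C1 := by
    have : 0 < (c * a) ^ p := Real.rpow_pos_of_pos hca p
    positivity
  have hC2nonneg : 0 ≤ C2 := by
    have : 0 < ε ^ p := Real.rpow_pos_of_pos hε0 p
    positivity
  refine ⟨max C1 C2, ?_⟩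
  have key : ∀ x ∈ K, ∀ y ∈ K, x < y → f x - f y ≤ max C1 C2 * (y - x) ^ p := by
    intro x hx y hy hxy
    have hx1 : x ∈ Set.Ioo (0:ℝ) 1 := hK hx
    have hy1 : y ∈ Set.Ioo (0:ℝ) 1 := hK hy
    have hax : a ≤ x := haLe hx
    have hyb : y ≤ b := hbGe hy
    set d := y - x with hd
    have hd0 : 0 < d := sub_pos.mpr hxy
    have hdp0 : 0 < d ^ p := Real.rpow_pos_of_pos hd0 p
    have hfyM : f y ≤ M := hmono a ha1 y hy1 (haLe hy)
    rcases lt_or_ge d ε with hsmall | hlarge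
    · -- small gap: use submultiplicativity
      set δ := d / (c * x) with hδdef
      have hcx : 0 < c * x := mul_pos hc hx1.1
      have hδ0 : 0 < δ := div_pos hd0 hcx
      have hδle : δ ≤ d / (c * a) := by
        apply div_le_div_of_nonneg_left hd0.le hca
        exact mul_le_mul_of_nonneg_left hax hc.le
      have hδm : δ < m / 2 := by
        rw [hδdef, div_lt_iff₀ hcx]
        have haxm : c * a * m ≤ c * x * m := mul_le_mul_of_nonneg_right (mul_le_mul_of_nonneg_left hax hc.le) hm0.le
        rw [hεdef] at hsmall
        nlinarith
      have hmb : m ≤ 1 - b := min_le_left _ _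
      have hmα : m ≤ 1 - α₀ := min_le_right _ _
      have hδx : δ < 1 - x := by linarith
      have heq : x * (1 + c * δ) = y := by
        rw [hδdef]
        field_simp
        rw [mul_add, mul_one, mul_div_cancel₀ d hx1.1.ne', hd]; ring
      have hsubx := hsub x hx1 δ hδ0 hδx (by rw [heq]; exact hy1.2)
      rw [heq] at hsubx
      have h1δ : 1 - δ ∈ Set.Ioo α₀ 1 := ⟨by linarith, by linarith⟩
      have h1δ01 : (1 - δ) ∈ Set.Ioo (0:ℝ) 1 := ⟨lt_trans hα₀.1 h1δ.1, h1δ.2⟩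
      have hf1 : 1 ≤ f (1 - δ) := hone _ h1δ01
      have hsolδ : f (1 - δ) - 1 ≤ A * δ ^ p := by
        have := hsol _ h1δ
        rwa [show (1:ℝ) - (1 - δ) = δ by ring] at this
      have hδp : δ ^ p ≤ d ^ p / (c * a) ^ p := by
        rw [← Real.div_rpow hd0.le hca.le]
        exact Real.rpow_le_rpow hδ0.le hδle hp.1.le
      have hδppos : 0 ≤ δ ^ p := (Real.rpow_pos_of_pos hδ0 p).le
      have step1 : f x - f y ≤ f y * (f (1 - δ) - 1) := by nlinarith
      have step2 : f y * (f (1 - δ) - 1) ≤ M * (A * δ ^ p) := by nlinarith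
      have step3 : M * (A * δ ^ p) ≤ C1 * d ^ p := by
        have hMA : 0 ≤ M * A := by positivity
        have : C1 * d ^ p = M * A * (d ^ p / (c * a) ^ p) := by rw [hC1]; ring
        rw [this]
        calc M * (A * δ ^ p) = M * A * δ ^ p := by ring
          _ ≤ M * A * (d ^ p / (c * a) ^ p) := mul_le_mul_of_nonneg_left hδp hMA
      calc f x - f y ≤ f y * (f (1 - δ) - 1) := step1
        _ ≤ M * (A * δ ^ p) := step2
        _ ≤ C1 * d ^ p := step3
        _ ≤ max C1 C2 * d ^ p := mul_le_mul_of_nonneg_right (le_max_left _ _) hdp0.le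
    · -- large gap: trivial bound
      have h1 : f x - f y ≤ M := by
        have := hmono a ha1 x hx1 hax
        have := hone y hy1
        linarith
      have hεp : ε ^ p ≤ d ^ p := Real.rpow_le_rpow hε0.le hlarge hp.1.le
      have hεppos : 0 < ε ^ p := Real.rpow_pos_of_pos hε0 p
      have h2 : M ≤ C2 * d ^ p := by
        rw [hC2, div_mul_eq_mul_div, le_div_iff₀ hεppos]
        exact mul_le_mul_of_nonneg_left hεp (by linarith)
      calc f x - f y ≤ M := h1
        _ ≤ C2 * d ^ p := h2
        _ ≤ max C1 C2 * d ^ p := by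
            apply mul_le_mul_of_nonneg_right (le_max_right _ _) hdp0.le
  intro x hx y hy
  rcases lt_trichotomy x y with h | h | h
  · have h1 : f y ≤ f x := hmono x (hK hx) y (hK hy) h.le
    rw [abs_of_nonneg (by linarith), abs_of_nonpos (by linarith)]
    have := key x hx y hy h
    simpa [neg_sub] using this
  · subst h
    simp [Real.zero_rpow (ne_of_gt hp.1)]
  · have h1 : f x ≤ f y := hmono y (hK hy) x (hK hx) h.le
    rw [abs_of_nonpos (by linarith), abs_of_nonneg (by linarith)]
    have := key y hy x hx h
    simpa [neg_sub] using this
end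

section
/- Let $\mathcal{B}$ be a homothecy invariant basis consisting of bounded open convex sets in $\mathbb{R}^n$. For every measurable set $E \subseteq \mathbb{R}^n$ of finite measure and every $\alpha \in (0,1)$, there exist dimensional constants $c_n, \kappa_n > 0$ such that for all $\delta \in (0, \kappa_n(1-\alpha))$, $\mathcal{H}_{\mathcal{B},\alpha}(E) \subseteq \mathcal{H}_{\mathcal{B},\, \alpha(1 + c_n \min(\alpha, 1-\alpha)^{2n}\delta)}\big(\mathcal{H}_{\mathcal{B},\, 1 - 3n^{3n/2}\delta}(E)\big)$. -/
open MeasureTheory Set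
open scoped ENNReal

/-- Closure under translations and positive dilations. -/
def HomothecyInvariant (n : ℕ) (𝓑 : Set (Set (EuclideanSpace ℝ (Fin n)))) : Prop :=
  ∀ B ∈ 𝓑, ∀ (v : EuclideanSpace ℝ (Fin n)) (r : ℝ), 0 < r →
    (fun x => v + r • x) '' B ∈ 𝓑

/-- The halo set `𝓗_{𝓑,α}(E) = {x : M_𝓑 χ_E (x) > α}`. -/
def halo (n : ℕ) (𝓑 : Set (Set (EuclideanSpace ℝ (Fin n))))
    (E : Set (EuclideanSpace ℝ (Fin n))) (α : ℝ) : Set (EuclideanSpace ℝ (Fin n)) :=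
  {x | ∃ B ∈ 𝓑, x ∈ B ∧ α * (volume B).toReal < (volume (E ∩ B)).toReal}

open scoped Pointwise Matrix

namespace HaloAux


variable {n : ℕ}

/-- anchored dilation of `B` about `y` with ratio `r`. -/
def dil (B : Set (EuclideanSpace ℝ (Fin n))) (y : EuclideanSpace ℝ (Fin n)) (r : ℝ) :
    Set (EuclideanSpace ℝ (Fin n)) :=
  (fun x => (1 - r) • y + r • x) '' B

lemma volume_image_homothety (v : EuclideanSpace ℝ (Fin n)) {r : ℝ} (hr : 0 < r)
    (s : Set (EuclideanSpace ℝ (Fin n))) :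
    volume ((fun x => v + r • x) '' s) = ENNReal.ofReal (r ^ n) * volume s := by
  have h1 : (fun x : EuclideanSpace ℝ (Fin n) => v + r • x) '' s = v +ᵥ (r • s) := by
    ext z
    simp only [Set.mem_image, Set.mem_vadd_set, Set.mem_smul_set]
    constructor
    · rintro ⟨x, hx, rfl⟩; exact ⟨r • x, ⟨x, hx, rfl⟩, rfl⟩
    · rintro ⟨w, ⟨x, hx, rfl⟩, rfl⟩; exact ⟨x, hx, rfl⟩
  rw [h1, measure_vadd, Measure.addHaar_smul, finrank_euclideanSpace_fin,
    abs_of_pos (pow_pos hr n)]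

lemma volume_dil (B : Set (EuclideanSpace ℝ (Fin n))) (y : EuclideanSpace ℝ (Fin n)) {r : ℝ}
    (hr : 0 < r) : volume (dil B y r) = ENNReal.ofReal (r ^ n) * volume B :=
  volume_image_homothety _ hr _

lemma isOpen_dil {B : Set (EuclideanSpace ℝ (Fin n))} (hB : IsOpen B)
    (y : EuclideanSpace ℝ (Fin n)) {r : ℝ} (hr : 0 < r) : IsOpen (dil B y r) := by
  have : (fun x : EuclideanSpace ℝ (Fin n) => (1 - r) • y + r • x) =
      (fun z : EuclideanSpace ℝ (Fin n) => (1 - r) • y + z) ∘ (fun x => r • x) := rfl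
  rw [dil, this, Set.image_comp]
  exact (isOpenMap_add_left _) _ (isOpenMap_smul₀ (ne_of_gt hr) _ hB)

lemma mem_dil_self {B : Set (EuclideanSpace ℝ (Fin n))} {y : EuclideanSpace ℝ (Fin n)}
    (hy : y ∈ B) (r : ℝ) : y ∈ dil B y r :=
  ⟨y, hy, by show (1 - r) • y + r • y = y; module⟩

lemma dil_one (B : Set (EuclideanSpace ℝ (Fin n))) (y : EuclideanSpace ℝ (Fin n)) :
    dil B y 1 = B := by
  simp [dil]

lemma dil_mono {B : Set (EuclideanSpace ℝ (Fin n))} (hB : Convex ℝ B)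
    {y : EuclideanSpace ℝ (Fin n)} (hy : y ∈ B) {r r' : ℝ} (hr : 0 < r) (hrr' : r ≤ r') :
    dil B y r ⊆ dil B y r' := by
  rintro _ ⟨b, hb, rfl⟩
  have hr' : 0 < r' := lt_of_lt_of_le hr hrr'
  refine ⟨((r' - r) / r') • y + (r / r') • b, ?_, ?_⟩
  · refine hB hy hb (div_nonneg (sub_nonneg.2 hrr') hr'.le) (by positivity) ?_
    field_simp
    ring
  · show (1 - r') • y + r' • (((r' - r) / r') • y + (r / r') • b) = (1 - r) • y + r • b
    have h1 : r' * ((r' - r) / r') = r' - r := by field_simp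
    have h2 : r' * (r / r') = r := by field_simp
    rw [smul_add, smul_smul, smul_smul, h1, h2]
    module

lemma dil_subset {B : Set (EuclideanSpace ℝ (Fin n))} (hB : Convex ℝ B)
    {y : EuclideanSpace ℝ (Fin n)} (hy : y ∈ B) {r : ℝ} (hr : 0 < r) (hr1 : r ≤ 1) :
    dil B y r ⊆ B := by
  have := dil_mono hB hy hr hr1
  rwa [dil_one] at this

lemma dil_subset_closedBall {B : Set (EuclideanSpace ℝ (Fin n))} {R₀ : ℝ}
    (hBR : B ⊆ Metric.closedBall 0 R₀) {y : EuclideanSpace ℝ (Fin n)} (hy : y ∈ B)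
    {r : ℝ} (hr : 0 ≤ r) : dil B y r ⊆ Metric.closedBall y (r * (2 * R₀)) := by
  rintro _ ⟨b, hb, rfl⟩
  have hby : ‖b - y‖ ≤ 2 * R₀ := by
    have h1 : ‖b‖ ≤ R₀ := by simpa using hBR hb
    have h2 : ‖y‖ ≤ R₀ := by simpa using hBR hy
    calc ‖b - y‖ ≤ ‖b‖ + ‖y‖ := norm_sub_le _ _
    _ ≤ 2 * R₀ := by linarith
  have : (1 - r) • y + r • b - y = r • (b - y) := by module
  simp only [Metric.mem_closedBall, dist_eq_norm, this, norm_smul, Real.norm_eq_abs,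
    abs_of_nonneg hr]
  exact mul_le_mul_of_nonneg_left hby hr



variable {n : ℕ}

lemma abs_coord_le_dist (x y : EuclideanSpace ℝ (Fin n)) (i : Fin n) :
    |x i - y i| ≤ dist x y := by
  rw [EuclideanSpace.dist_eq]
  refine Real.le_sqrt_of_sq_le ?_
  have : |x i - y i| ^ 2 = dist (x i) (y i) ^ 2 := by
    rw [Real.dist_eq, sq_abs]
  rw [this]
  exact Finset.single_le_sum (f := fun j => dist (x j) (y j) ^ 2)
    (fun j _ => sq_nonneg _) (Finset.mem_univ i)

noncomputable def Rn (n : ℕ) : ℝ := (n : ℝ) + 2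
noncomputable def rn (n : ℕ) : ℝ := 1 / ((n : ℝ) + 1) ^ 2
noncomputable def Creal (n : ℕ) : ℝ := (5 * ((n : ℝ) + 2) * ((n : ℝ) + 1) ^ 2) ^ n

lemma Rn_pos : 0 < Rn n := by rw [Rn]; positivity
lemma rn_pos : 0 < rn n := by rw [rn]; positivity
lemma Creal_pos : 0 < Creal n := by rw [Creal]; positivity

lemma five_Rn_pow : (5 * Rn n) ^ n = Creal n * rn n ^ n := by
  rw [Rn, rn, Creal, ← mul_pow]
  congr 1
  field_simp

set_option maxHeartbeats 1000000 in
lemma exists_affine_sandwich {B : Set (EuclideanSpace ℝ (Fin n))} (hBc : Convex ℝ B)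
    (hBo : IsOpen B) (hbd : Bornology.IsBounded B) (hne : B.Nonempty) :
    ∃ (ξ φ : EuclideanSpace ℝ (Fin n) → EuclideanSpace ℝ (Fin n))
      (g₀ : EuclideanSpace ℝ (Fin n)) (D : ℝ),
      Continuous φ ∧ 0 < D ∧
      (∀ x, φ (ξ x) = x) ∧ (∀ ζ, ξ (φ ζ) = ζ) ∧
      (∀ (a : ℝ) (x y : EuclideanSpace ℝ (Fin n)),
        ξ ((1 - a) • x + a • y) = (1 - a) • ξ x + a • ξ y) ∧
      (∀ x ∈ closure B, dist (ξ x) g₀ ≤ Rn n) ∧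
      (Metric.closedBall g₀ (rn n) ⊆ ξ '' closure B) ∧
      (∀ s : Set (EuclideanSpace ℝ (Fin n)), volume (φ '' s) = ENNReal.ofReal D * volume s) := by
  classical
  obtain ⟨x₀, hx₀⟩ := hne
  obtain ⟨ε, hε, hball⟩ := Metric.isOpen_iff.1 hBo x₀ hx₀
  set K := closure B with hK
  have hKc : IsCompact K := hbd.isCompact_closure
  have hKconv : Convex ℝ K := hBc.closure
  have hBK : B ⊆ K := subset_closure
  -- the tuple space
  set T : Set (Fin (n+1) → EuclideanSpace ℝ (Fin n)) := Set.pi Set.univ (fun _ => K) with hT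
  have hTc : IsCompact T := isCompact_univ_pi (fun _ => hKc)
  -- the determinant functional
  set matQ : (Fin (n+1) → EuclideanSpace ℝ (Fin n)) → Matrix (Fin n) (Fin n) ℝ :=
    fun w => Matrix.of (fun i j => (w j.succ - w 0) i) with hmatQ
  have hcont : Continuous fun w => |(matQ w).det| := by
    refine (Continuous.matrix_det ?_).abs
    refine continuous_matrix (fun i j => ?_)
    show Continuous fun w : Fin (n+1) → EuclideanSpace ℝ (Fin n) =>
      (EuclideanSpace.proj i) (w j.succ - w 0)
    exact (EuclideanSpace.proj i).continuous.comp
      ((continuous_apply (j.succ)).sub (continuous_apply (0 : Fin (n+1))))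
  -- the maximizer
  have hTne : T.Nonempty := ⟨fun _ => x₀, fun i _ => hBK hx₀⟩
  obtain ⟨v, hvT, hmax⟩ := hTc.exists_isMaxOn hTne hcont.continuousOn
  have hvK : ∀ i, v i ∈ K := fun i => hvT i (Set.mem_univ i)
  -- lower bound for the max via a small coordinate simplex
  set w₀ : Fin (n+1) → EuclideanSpace ℝ (Fin n) :=
    Fin.cons x₀ (fun j => x₀ + (ε/2) • EuclideanSpace.single j 1) with hw₀
  have hw₀T : w₀ ∈ T := by
    intro i _
    refine Fin.cases ?_ (fun j => ?_) i
    · simpa only [hw₀, Fin.cons_zero] using hBK hx₀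
    · simp only [hw₀, Fin.cons_succ]
      refine hBK (hball ?_)
      simp only [Metric.mem_ball, dist_self_add_left, norm_smul, Real.norm_eq_abs,
        EuclideanSpace.norm_single, norm_one, mul_one, abs_of_pos (by linarith : (0:ℝ) < ε/2)]
      linarith
  have hmat_w₀ : matQ w₀ = (ε/2) • (1 : Matrix (Fin n) (Fin n) ℝ) := by
    ext i j
    simp only [hmatQ, hw₀, Matrix.of_apply, Fin.cons_succ, Fin.cons_zero,
      add_sub_cancel_left, Matrix.smul_apply, Matrix.one_apply, smul_eq_mul]
    rw [PiLp.smul_apply, EuclideanSpace.single_apply]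
    by_cases h : i = j <;> simp [h, eq_comm, smul_eq_mul]
  set M := matQ v with hM
  have hlow : (ε/2)^n ≤ |M.det| := by
    have h : |(matQ w₀).det| ≤ |(matQ v).det| := hmax hw₀T
    simp only [hmat_w₀, Matrix.det_smul, Matrix.det_one, mul_one, smul_eq_mul, abs_pow] at h
    calc (ε/2)^n = |ε/2|^(Fintype.card (Fin n)) := by
          rw [abs_of_pos (by linarith : (0:ℝ) < ε/2), Fintype.card_fin]
    _ ≤ _ := h
  have hDpos : 0 < |M.det| := lt_of_lt_of_le (by positivity) hlow
  have hDne : M.det ≠ 0 := fun h => by simp [h] at hDpos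
  have hDu : IsUnit M.det := isUnit_iff_ne_zero.2 hDne
  set A := M⁻¹ with hA
  have hMA : M * A = 1 := Matrix.mul_nonsing_inv _ hDu
  have hAM : A * M = 1 := Matrix.nonsing_inv_mul _ hDu
  set v₀ : EuclideanSpace ℝ (Fin n) := v 0 with hv₀
  set ξ : EuclideanSpace ℝ (Fin n) → EuclideanSpace ℝ (Fin n) :=
    fun x => Matrix.toEuclideanLin A (x - v₀) with hξ
  set φ : EuclideanSpace ℝ (Fin n) → EuclideanSpace ℝ (Fin n) :=
    fun ζ => v₀ + Matrix.toEuclideanLin M ζ with hφ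
  have hMlin : ∀ ζ : EuclideanSpace ℝ (Fin n),
      Matrix.toEuclideanLin A (Matrix.toEuclideanLin M ζ) = ζ := by
    intro ζ
    rw [Matrix.toEuclideanLin_apply, Matrix.toEuclideanLin_apply, WithLp.ofLp_toLp,
      Matrix.mulVec_mulVec, hAM, Matrix.one_mulVec, WithLp.toLp_ofLp]
  have hMlin' : ∀ ζ : EuclideanSpace ℝ (Fin n),
      Matrix.toEuclideanLin M (Matrix.toEuclideanLin A ζ) = ζ := by
    intro ζ
    rw [Matrix.toEuclideanLin_apply, Matrix.toEuclideanLin_apply, WithLp.ofLp_toLp,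
      Matrix.mulVec_mulVec, hMA, Matrix.one_mulVec, WithLp.toLp_ofLp]
  have hφξ : ∀ x, φ (ξ x) = x := by
    intro x; simp only [hξ, hφ, hMlin']; abel
  have hξφ : ∀ ζ, ξ (φ ζ) = ζ := by
    intro ζ; simp only [hξ, hφ, add_sub_cancel_left, hMlin]
  -- affine property of ξ
  have hξaff : ∀ (a : ℝ) (x y : EuclideanSpace ℝ (Fin n)),
      ξ ((1 - a) • x + a • y) = (1 - a) • ξ x + a • ξ y := by
    intro a x y
    have h1 : (1 - a) • x + a • y - v₀ = (1 - a) • (x - v₀) + a • (y - v₀) := by module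
    simp only [hξ, h1, map_add, LinearMap.map_smul]
  -- the center
  set g₀ : EuclideanSpace ℝ (Fin n) :=
    (WithLp.equiv 2 (Fin n → ℝ)).symm (fun _ => 1 / ((n : ℝ) + 1)) with hg₀
  have hg₀i : ∀ i, g₀ i = 1 / ((n : ℝ) + 1) := fun i => by
    rw [hg₀]; rfl
  -- key coordinate bound via Cramer's rule and maximality
  have hkey : ∀ x ∈ K, ∀ j : Fin n, |(ξ x) j| ≤ 1 := by
    intro x hx j
    set b : Fin n → ℝ := WithLp.equiv 2 (Fin n → ℝ) (x - v₀) with hb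
    set c : Fin n → ℝ := A *ᵥ b with hc
    have hξc : ∀ i, (ξ x) i = c i := by
      intro i
      simp only [hξ, Matrix.toEuclideanLin_apply]; rfl
    have hbc : M *ᵥ c = b := by
      rw [hc, Matrix.mulVec_mulVec, hMA, Matrix.one_mulVec]
    -- Cramer
    have hcram : (M.updateCol j b).det = M.det * c j := by
      have h1 : (M.updateCol j b).det = Matrix.cramer M b j := (Matrix.cramer_apply _ _ _).symm
      rw [h1, Matrix.cramer_eq_adjugate_mulVec, ← hbc, Matrix.mulVec_mulVec,
        Matrix.adjugate_mul, Matrix.smul_mulVec, Matrix.one_mulVec]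
      simp
    -- the update tuple
    set w' : Fin (n+1) → EuclideanSpace ℝ (Fin n) := Function.update v j.succ x with hw'
    have hw'T : w' ∈ T := by
      intro i _
      by_cases h : i = j.succ
      · rw [hw', h, Function.update_self]; exact hx
      · rw [hw', Function.update_of_ne h]; exact hvK i
    have hw'M : matQ w' = M.updateCol j b := by
      ext i k
      have h0 : w' 0 = v 0 := Function.update_of_ne (Fin.succ_ne_zero j).symm _ _
      by_cases h : k = j
      · subst h
        have hk : w' k.succ = x := Function.update_self _ _ _
        simp only [hmatQ, Matrix.of_apply, Matrix.updateCol_apply, if_pos rfl, hk, h0]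
        simp [hb, hv₀]
      · have hk : w' k.succ = v k.succ :=
          Function.update_of_ne (fun hkj => h (Fin.succ_injective _ hkj)) _ _
        simp only [hmatQ, Matrix.of_apply, Matrix.updateCol_apply, if_neg h, hk, h0]
        rfl
    have hle : |(matQ w').det| ≤ |M.det| := hmax hw'T
    rw [hw'M, hcram, abs_mul] at hle
    calc |(ξ x) j| = |c j| := by rw [hξc]
    _ ≤ 1 := by
      by_contra hgt
      push_neg at hgt
      nlinarith [hDpos]
  -- outer inclusion
  have houter : ∀ x ∈ K, dist (ξ x) g₀ ≤ Rn n := by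
    intro x hx
    rw [EuclideanSpace.dist_eq]
    have hterm : ∀ i : Fin n, dist ((ξ x) i) (g₀ i) ^ 2 ≤ 4 := by
      intro i
      have h1 : |(ξ x) i| ≤ 1 := hkey x hx i
      have h2 : (0:ℝ) < 1 / ((n : ℝ) + 1) := by positivity
      have h3 : 1 / ((n : ℝ) + 1) ≤ 1 := by
        rw [div_le_one (by positivity)]
        simp [Nat.cast_nonneg]
      have h4 : |(ξ x) i - g₀ i| ≤ 2 := by
        rw [hg₀i]
        have := abs_sub_abs_le_abs_sub ((ξ x) i) (0:ℝ)
        have h5 := abs_sub ((ξ x) i) (1 / ((n : ℝ) + 1))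
        calc |(ξ x) i - 1 / ((n : ℝ) + 1)| ≤ |(ξ x) i| + |1 / ((n : ℝ) + 1)| := abs_sub _ _
        _ ≤ 1 + 1 := by
            rw [abs_of_pos h2]
            exact add_le_add h1 h3
        _ = 2 := by norm_num
      rw [Real.dist_eq]
      nlinarith [abs_nonneg ((ξ x) i - g₀ i)]
    have hsum : ∑ i : Fin n, dist ((ξ x) i) (g₀ i) ^ 2 ≤ (n : ℝ) * 4 := by
      calc ∑ i : Fin n, dist ((ξ x) i) (g₀ i) ^ 2 ≤ ∑ _i : Fin n, (4:ℝ) :=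
            Finset.sum_le_sum (fun i _ => hterm i)
      _ = (n : ℝ) * 4 := by simp [mul_comm]
    calc Real.sqrt (∑ i : Fin n, dist ((ξ x) i) (g₀ i) ^ 2) ≤ Real.sqrt ((n : ℝ) * 4) :=
          Real.sqrt_le_sqrt hsum
    _ ≤ Rn n := by
        rw [show ((n:ℝ) * 4) = (n:ℝ) * 4 from rfl]
        have : ((n:ℝ) * 4) ≤ (Rn n) ^ 2 := by
          rw [Rn]; nlinarith [Nat.cast_nonneg (α := ℝ) n]
        calc Real.sqrt ((n : ℝ) * 4) ≤ Real.sqrt ((Rn n) ^ 2) := Real.sqrt_le_sqrt this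
        _ = Rn n := by
            rw [Real.sqrt_sq (le_of_lt Rn_pos)]
  -- inner inclusion
  have hinner : Metric.closedBall g₀ (rn n) ⊆ ξ '' K := by
    intro ζ hζ
    have hco : ∀ i, |ζ i - 1 / ((n : ℝ) + 1)| ≤ rn n := by
      intro i
      have := abs_coord_le_dist ζ g₀ i
      rw [hg₀i] at this
      exact this.trans (Metric.mem_closedBall.1 hζ)
    have hrn : rn n ≤ 1 / ((n : ℝ) + 1) := by
      rw [rn, pow_two, div_le_div_iff₀ (by positivity) (by positivity)]
      nlinarith [Nat.cast_nonneg (α := ℝ) n]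
    have hpos : ∀ i, 0 ≤ ζ i := by
      intro i
      have h1 := (abs_le.1 (hco i)).1
      linarith [hrn]
    have hsum : ∑ i : Fin n, ζ i ≤ 1 := by
      have h1 : ∀ i : Fin n, ζ i ≤ 1 / ((n : ℝ) + 1) + rn n := by
        intro i
        have := (abs_le.1 (hco i)).2
        linarith
      calc ∑ i : Fin n, ζ i ≤ ∑ _i : Fin n, (1 / ((n : ℝ) + 1) + rn n) :=
            Finset.sum_le_sum (fun i _ => h1 i)
      _ = (n : ℝ) * (1 / ((n : ℝ) + 1) + rn n) := by
            rw [Finset.sum_const, Finset.card_univ, Fintype.card_fin, nsmul_eq_mul]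
      _ ≤ 1 := by
          rw [rn]
          have hn0 : (0:ℝ) ≤ (n:ℝ) := Nat.cast_nonneg n
          have h2 : (0:ℝ) < (n:ℝ) + 1 := by linarith
          rw [mul_add]
          have e1 : (n:ℝ) * (1 / ((n:ℝ)+1)) = (n:ℝ)/((n:ℝ)+1) := by ring
          have e2 : (n:ℝ) * (1 / ((n:ℝ)+1)^2) ≤ 1/((n:ℝ)+1) := by
            rw [mul_one_div, div_le_div_iff₀ (by positivity) h2]
            nlinarith
          rw [e1]
          have e3 : (n:ℝ)/((n:ℝ)+1) + 1/((n:ℝ)+1) = 1 := by field_simp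
          linarith
    -- the convex combination
    have hMζ : Matrix.toEuclideanLin M ζ = ∑ j : Fin n, ζ j • (v j.succ - v₀) := by
      have hrepr : ζ = ∑ j : Fin n, ζ j • (PiLp.basisFun 2 ℝ (Fin n)) j := by
        have := (PiLp.basisFun 2 ℝ (Fin n)).sum_repr ζ
        simp only [PiLp.basisFun_repr] at this
        exact this.symm
      have hbase : ∀ j : Fin n, Matrix.toEuclideanLin M ((PiLp.basisFun 2 ℝ (Fin n)) j)
          = v j.succ - v₀ := by
        intro j
        rw [PiLp.basisFun_apply]
        ext i
        simp [Matrix.toEuclideanLin_apply, Matrix.mulVec_single, hM, hmatQ, hv₀]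
      conv_lhs => rw [hrepr]
      rw [map_sum]
      refine Finset.sum_congr rfl (fun j _ => ?_)
      rw [LinearMap.map_smul, hbase]
    have hconv : φ ζ ∈ K := by
      have hxe : φ ζ = ∑ i : Fin (n+1),
          ((Fin.cons (1 - ∑ j : Fin n, ζ j) (fun j => ζ j) : Fin (n+1) → ℝ) i) • v i := by
        rw [Fin.sum_univ_succ]
        simp only [Fin.cons_zero, Fin.cons_succ]
        rw [hφ]
        simp only [hMζ]
        have : ∑ j : Fin n, ζ j • (v j.succ - v₀) =
            (∑ j : Fin n, ζ j • v j.succ) - (∑ j : Fin n, ζ j) • v₀ := by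
          rw [Finset.sum_smul]
          rw [← Finset.sum_sub_distrib]
          congr 1
          funext j
          rw [smul_sub]
        rw [this, sub_smul, one_smul]
        abel
      rw [hxe]
      refine hKconv.sum_mem ?_ ?_ (fun i _ => hvK i)
      · intro i _
        refine Fin.cases ?_ (fun j => ?_) i
        · simp only [Fin.cons_zero]; linarith [hsum]
        · simp only [Fin.cons_succ]; exact hpos j
      · rw [Fin.sum_univ_succ]
        simp only [Fin.cons_zero, Fin.cons_succ]
        ring
    exact ⟨φ ζ, hconv, hξφ ζ⟩
  -- volume identity
  have hdet : LinearMap.det (Matrix.toEuclideanLin M) = M.det := by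
    rw [Matrix.toEuclideanLin_eq_toLin, LinearMap.det_toLin]
  have hφcont : Continuous φ := by
    refine continuous_const.add ?_
    exact (Matrix.toEuclideanLin M).continuous_of_finiteDimensional
  have hvol : ∀ s : Set (EuclideanSpace ℝ (Fin n)),
      volume (φ '' s) = ENNReal.ofReal |M.det| * volume s := by
    intro s
    have h1 : φ '' s = v₀ +ᵥ ((Matrix.toEuclideanLin M) '' s) := by
      ext z
      simp only [hφ, Set.mem_image, Set.mem_vadd_set]
      constructor
      · rintro ⟨x, hx, rfl⟩; exact ⟨Matrix.toEuclideanLin M x, ⟨x, hx, rfl⟩, rfl⟩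
      · rintro ⟨w, ⟨x, hx, rfl⟩, rfl⟩; exact ⟨x, hx, rfl⟩
    rw [h1, measure_vadd, MeasureTheory.Measure.addHaar_image_linearMap, hdet]
  exact ⟨ξ, φ, g₀, |M.det|, hφcont, hDpos, hφξ, hξφ, hξaff, houter, hinner, hvol⟩

lemma john_comparison {B : Set (EuclideanSpace ℝ (Fin n))} (hBc : Convex ℝ B)
    (hBo : IsOpen B) (hbd : Bornology.IsBounded B) (hne : B.Nonempty) :
    ∃ S : EuclideanSpace ℝ (Fin n) → ℝ → Set (EuclideanSpace ℝ (Fin n)),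
      (∀ z ρ, MeasurableSet (S z ρ)) ∧
      (∀ z ρ, 0 < ρ → volume (S z ρ) ≤ ENNReal.ofReal (Creal n) * volume (dil B z ρ)) ∧
      (∀ y z ρy ρz, 0 < ρy → 0 < ρz → ρy ≤ 2 * ρz →
        (dil B y ρy ∩ dil B z ρz).Nonempty → dil B y ρy ⊆ S z ρz) := by
  obtain ⟨ξ, φ, g₀, D, hφcont, hD, hφξ, hξφ, hξaff, houter, hinner, hvol⟩ :=
    exists_affine_sandwich hBc hBo hbd hne
  set c : EuclideanSpace ℝ (Fin n) → ℝ → EuclideanSpace ℝ (Fin n) :=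
    fun z ρ => (1 - ρ) • ξ z + ρ • g₀ with hc
  refine ⟨fun z ρ => φ '' Metric.closedBall (c z ρ) (5 * Rn n * ρ), ?_, ?_, ?_⟩
  · intro z ρ
    exact ((isCompact_closedBall _ _).image hφcont).measurableSet
  · intro z ρ hρ
    -- upper bound for the image ball, lower bound for B
    have hball : volume (Metric.closedBall (c z ρ) (5 * Rn n * ρ))
        = ENNReal.ofReal ((5 * Rn n * ρ) ^ n) * volume (Metric.ball (0 : EuclideanSpace ℝ (Fin n)) 1) := by
      rw [Measure.addHaar_closedBall volume _ (mul_nonneg (mul_nonneg (by norm_num) Rn_pos.le) hρ.le),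
        finrank_euclideanSpace_fin]
    have hBclosure : volume (closure B) = volume B := by
      refine le_antisymm ?_ (measure_mono subset_closure)
      calc volume (closure B) ≤ volume (B ∪ frontier B) := by
            refine measure_mono ?_
            intro z hz
            by_cases h : z ∈ B
            · exact Or.inl h
            · exact Or.inr ⟨hz, fun hzi => h (interior_subset hzi)⟩
      _ ≤ volume B + volume (frontier B) := measure_union_le _ _
      _ = volume B := by rw [hBc.addHaar_frontier volume, add_zero]
    have hlower : ENNReal.ofReal D * (ENNReal.ofReal (rn n ^ n)
        * volume (Metric.ball (0 : EuclideanSpace ℝ (Fin n)) 1)) ≤ volume B := by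
      have h1 : φ '' Metric.closedBall g₀ (rn n) ⊆ closure B := by
        rintro _ ⟨ζ, hζ, rfl⟩
        obtain ⟨w, hwK, hw⟩ := hinner hζ
        rw [← hw, hφξ]
        exact hwK
      have h2 : volume (φ '' Metric.closedBall g₀ (rn n)) ≤ volume (closure B) :=
        measure_mono h1
      rw [hvol, Measure.addHaar_closedBall volume _ (le_of_lt rn_pos),
        finrank_euclideanSpace_fin, hBclosure] at h2
      exact h2
    rw [hvol, hball, volume_dil _ _ hρ]
    have hkey : (5 * Rn n * ρ) ^ n = (Creal n * ρ ^ n) * rn n ^ n := by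
      rw [mul_pow, five_Rn_pow]; ring
    calc ENNReal.ofReal D * (ENNReal.ofReal ((5 * Rn n * ρ) ^ n)
          * volume (Metric.ball (0 : EuclideanSpace ℝ (Fin n)) 1))
        = ENNReal.ofReal (Creal n * ρ ^ n) * (ENNReal.ofReal D * (ENNReal.ofReal (rn n ^ n)
          * volume (Metric.ball (0 : EuclideanSpace ℝ (Fin n)) 1))) := by
          rw [hkey, ENNReal.ofReal_mul (mul_nonneg Creal_pos.le (pow_nonneg hρ.le n))]
          ring
    _ ≤ ENNReal.ofReal (Creal n * ρ ^ n) * volume B :=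
          mul_le_mul_right hlower _
    _ = ENNReal.ofReal (Creal n) * (ENNReal.ofReal (ρ ^ n) * volume B) := by
          rw [ENNReal.ofReal_mul (le_of_lt Creal_pos), mul_assoc]
  · rintro y z ρy ρz hρy hρz hle ⟨p, hpy, hpz⟩
    have hdil : ∀ (w : EuclideanSpace ℝ (Fin n)) (q : EuclideanSpace ℝ (Fin n)) (ρ : ℝ),
        0 < ρ → w ∈ dil B q ρ → dist (ξ w) (c q ρ) ≤ ρ * Rn n := by
      rintro _ q ρ hρ ⟨b, hb, rfl⟩
      rw [hξaff ρ q b, hc]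
      have : (1 - ρ) • ξ q + ρ • ξ b - ((1 - ρ) • ξ q + ρ • g₀) = ρ • (ξ b - g₀) := by
        module
      rw [dist_eq_norm, this, norm_smul, Real.norm_eq_abs, abs_of_pos hρ]
      exact mul_le_mul_of_nonneg_left (by
        rw [← dist_eq_norm]; exact houter b (subset_closure hb)) (le_of_lt hρ)
    have hcc : dist (c y ρy) (c z ρz) ≤ 3 * ρz * Rn n := by
      calc dist (c y ρy) (c z ρz) ≤ dist (c y ρy) (ξ p) + dist (ξ p) (c z ρz) :=
            dist_triangle _ _ _
      _ ≤ ρy * Rn n + ρz * Rn n := by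
          refine add_le_add ?_ (hdil p z ρz hρz hpz)
          rw [dist_comm]
          exact hdil p y ρy hρy hpy
      _ ≤ 3 * ρz * Rn n := by nlinarith [Rn_pos (n := n), hρz]
    intro w hw
    refine ⟨ξ w, ?_, hφξ w⟩
    rw [Metric.mem_closedBall]
    calc dist (ξ w) (c z ρz) ≤ dist (ξ w) (c y ρy) + dist (c y ρy) (c z ρz) :=
          dist_triangle _ _ _
    _ ≤ ρy * Rn n + 3 * ρz * Rn n := add_le_add (hdil w y ρy hρy hw) hcc
    _ ≤ 5 * Rn n * ρz := by nlinarith [Rn_pos (n := n)]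

lemma ae_density {B E : Set (EuclideanSpace ℝ (Fin n))} (hE : MeasurableSet E)
    (hBo : IsOpen B) {R₀ : ℝ} (hR₀ : 0 < R₀) (hBR : B ⊆ Metric.closedBall 0 R₀) :
    ∀ᵐ y ∂(volume : Measure (EuclideanSpace ℝ (Fin n))), y ∈ E ∩ B → ∀ θ : ℝ, θ < 1 →
      ∀ t : ℝ, 0 < t → ∃ r : ℝ, 0 < r ∧ r ≤ t ∧ r ≤ 1 ∧
        θ * (volume (dil B y r)).toReal < (volume (E ∩ dil B y r)).toReal := by
  filter_upwards [Besicovitch.ae_tendsto_measure_inter_div_of_measurableSet volume hE]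
    with y hy hymem θ hθ t ht
  obtain ⟨hyE, hyB⟩ := hymem
  rw [Set.indicator_of_mem hyE] at hy
  simp only [Pi.one_apply] at hy
  -- basic positive quantities
  have hbfin : volume B < ⊤ :=
    lt_of_le_of_lt (measure_mono hBR) measure_closedBall_lt_top
  have hb0 : 0 < volume B := hBo.measure_pos volume ⟨y, hyB⟩
  set bR := (volume B).toReal with hbR_def
  have hbR : 0 < bR := ENNReal.toReal_pos hb0.ne' hbfin.ne
  set ωe := volume (Metric.ball (0 : EuclideanSpace ℝ (Fin n)) 1) with hωe_def
  have hω0 : 0 < ωe := Metric.measure_ball_pos volume _ one_pos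
  have hωfin : ωe < ⊤ := measure_ball_lt_top
  set ωR := ωe.toReal with hωR_def
  have hωR : 0 < ωR := ENNReal.toReal_pos hω0.ne' hωfin.ne
  -- choose epsilon
  set ε := min (1/2) ((1 - θ) * bR / (2 * (2*R₀)^n * ωR)) with hε_def
  have hε0 : 0 < ε := by
    refine lt_min (by norm_num) ?_
    have h1 : 0 < (1 - θ) * bR := mul_pos (by linarith) hbR
    positivity
  have hεkey : ε * (2*R₀)^n * ωR < (1 - θ) * bR := by
    have h1 : ε ≤ (1 - θ) * bR / (2 * (2*R₀)^n * ωR) := min_le_right _ _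
    have h2 : 0 < (2*R₀)^n * ωR := by positivity
    have h3 : ε * ((2*R₀)^n * ωR) ≤ ((1 - θ) * bR / (2 * (2*R₀)^n * ωR)) * ((2*R₀)^n * ωR) :=
      mul_le_mul_of_nonneg_right h1 h2.le
    have h4 : ((1 - θ) * bR / (2 * (2*R₀)^n * ωR)) * ((2*R₀)^n * ωR) = (1 - θ) * bR / 2 := by
      field_simp
    have h5 : (1 - θ) * bR / 2 < (1 - θ) * bR := by
      have := mul_pos (show (0:ℝ) < 1 - θ by linarith) hbR
      linarith
    calc ε * (2*R₀)^n * ωR = ε * ((2*R₀)^n * ωR) := by ring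
    _ ≤ (1 - θ) * bR / 2 := h3.trans_eq h4
    _ < (1 - θ) * bR := h5
  -- eventually the density ratio is large
  have hc₀ : ENNReal.ofReal (1 - ε) < 1 := by
    rw [ENNReal.ofReal_lt_one]
    linarith
  have hev := hy.eventually_const_lt hc₀
  rw [eventually_nhdsWithin_iff, Metric.eventually_nhds_iff] at hev
  obtain ⟨s₀, hs₀, hball⟩ := hev
  -- choose the radius
  set r := min (min t 1) (s₀ / (4 * R₀)) with hr_def
  have hr0 : 0 < r := by
    refine lt_min (lt_min ht one_pos) (by positivity)
  refine ⟨r, hr0, (min_le_left _ _).trans (min_le_left _ _),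
    (min_le_left _ _).trans (min_le_right _ _), ?_⟩
  have hs0 : 0 < r * (2 * R₀) := by positivity
  have hss₀ : r * (2 * R₀) < s₀ := by
    have h1 : r ≤ s₀ / (4 * R₀) := min_le_right _ _
    have h3 : r * (2 * R₀) ≤ (s₀ / (4 * R₀)) * (2 * R₀) :=
      mul_le_mul_of_nonneg_right h1 (by positivity)
    have h4 : (s₀ / (4 * R₀)) * (2 * R₀) = s₀ / 2 := by field_simp; ring
    rw [h4] at h3
    linarith
  have hrat : ENNReal.ofReal (1 - ε) <
      volume (E ∩ Metric.closedBall y (r * (2 * R₀))) /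
        volume (Metric.closedBall y (r * (2 * R₀))) := by
    refine hball ?_ (mem_Ioi.2 hs0)
    rw [Real.dist_eq, sub_zero, abs_of_pos hs0]
    exact hss₀
  set cb := Metric.closedBall y (r * (2 * R₀)) with hcb_def
  have hcbfin : volume cb < ⊤ := measure_closedBall_lt_top
  have hcb0 : volume cb ≠ 0 := by
    exact (Metric.measure_closedBall_pos volume y hs0).ne'
  have hEcb : ENNReal.ofReal (1 - ε) * volume cb < volume (E ∩ cb) :=
    (ENNReal.lt_div_iff_mul_lt (Or.inl hcb0) (Or.inl hcbfin.ne)).1 hrat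
  -- real versions
  have hEcbfin : volume (E ∩ cb) < ⊤ :=
    lt_of_le_of_lt (measure_mono Set.inter_subset_right) hcbfin
  have h1 : (1 - ε) * (volume cb).toReal ≤ (volume (E ∩ cb)).toReal := by
    have := ENNReal.toReal_mono hEcbfin.ne hEcb.le
    rwa [ENNReal.toReal_mul, ENNReal.toReal_ofReal (by linarith [hε0, min_le_left (1/2 : ℝ) ((1 - θ) * bR / (2 * (2*R₀)^n * ωR))] : (0:ℝ) ≤ 1 - ε)] at this
  have hdiffeq : volume (cb \ E) = volume cb - volume (E ∩ cb) := by
    have : cb \ E = cb \ (E ∩ cb) := by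
      ext z; simp only [Set.mem_diff, Set.mem_inter_iff]; tauto
    rw [this, measure_diff Set.inter_subset_right
      ((hE.inter measurableSet_closedBall).nullMeasurableSet) hEcbfin.ne]
  have hdiff : (volume (cb \ E)).toReal ≤ ε * (volume cb).toReal := by
    rw [hdiffeq, ENNReal.toReal_sub_of_le (measure_mono Set.inter_subset_right) hcbfin.ne]
    linarith [h1]
  -- the dilate
  set K := dil B y r with hK_def
  have hKsub : K ⊆ cb := by
    rw [hcb_def]
    exact dil_subset_closedBall hBR hyB hr0.le
  have hsplit : volume K ≤ volume (E ∩ K) + volume (cb \ E) := by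
    refine le_trans (measure_mono ?_) (measure_union_le _ _)
    intro z hz
    by_cases h : z ∈ E
    · exact Or.inl ⟨h, hz⟩
    · exact Or.inr ⟨hKsub hz, h⟩
  have hEKfin : volume (E ∩ K) < ⊤ :=
    lt_of_le_of_lt (measure_mono (Set.inter_subset_right.trans hKsub)) hcbfin
  have hcbEfin : volume (cb \ E) < ⊤ :=
    lt_of_le_of_lt (measure_mono Set.diff_subset) hcbfin
  have hsplitR : (volume K).toReal ≤ (volume (E ∩ K)).toReal + (volume (cb \ E)).toReal := by
    have h2 := ENNReal.toReal_mono (by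
      exact (ENNReal.add_lt_top.2 ⟨hEKfin, hcbEfin⟩).ne) hsplit
    rwa [ENNReal.toReal_add hEKfin.ne hcbEfin.ne] at h2
  have hKvol : (volume K).toReal = r^n * bR := by
    rw [hK_def, volume_dil _ _ hr0, ENNReal.toReal_mul, ENNReal.toReal_ofReal (by positivity)]
  have hcbvol : (volume cb).toReal = (2*R₀)^n * r^n * ωR := by
    rw [hcb_def, Measure.addHaar_closedBall volume _ hs0.le, finrank_euclideanSpace_fin,
      ENNReal.toReal_mul, ENNReal.toReal_ofReal (by positivity)]
    ring
  -- conclude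
  have hfinal : θ * (r^n * bR) < r^n * bR - ε * ((2*R₀)^n * r^n * ωR) := by
    have hrn : 0 < r^n := pow_pos hr0 n
    nlinarith [hεkey, hrn]
  calc θ * (volume K).toReal = θ * (r^n * bR) := by rw [hKvol]
  _ < r^n * bR - ε * ((2*R₀)^n * r^n * ωR) := hfinal
  _ ≤ (volume K).toReal - (volume (cb \ E)).toReal := by
      rw [hKvol]
      have : (volume (cb \ E)).toReal ≤ ε * ((2*R₀)^n * r^n * ωR) := by
        calc (volume (cb \ E)).toReal ≤ ε * (volume cb).toReal := hdiff
        _ = ε * ((2*R₀)^n * r^n * ωR) := by rw [hcbvol]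
      linarith
  _ ≤ (volume (E ∩ K)).toReal := by linarith [hsplitR]

lemma exists_stopping {B E : Set (EuclideanSpace ℝ (Fin n))} (hE : MeasurableSet E)
    (hBc : Convex ℝ B) (hBo : IsOpen B) (hBfin : volume B < ⊤)
    {y : EuclideanSpace ℝ (Fin n)} (hyB : y ∈ B) {βs : ℝ} (hβs0 : 0 ≤ βs)
    (hd1 : (volume (E ∩ B)).toReal ≤ βs * (volume B).toReal)
    {r₀ : ℝ} (hr₀0 : 0 < r₀) (hr₀1 : r₀ ≤ 1)
    (hsm : βs * (volume (dil B y r₀)).toReal < (volume (E ∩ dil B y r₀)).toReal) :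
    ∃ ρ, 0 < ρ ∧ ρ ≤ 1 ∧
      (volume (E ∩ dil B y ρ)).toReal = βs * (volume (dil B y ρ)).toReal := by
  classical
  set bR := (volume B).toReal with hbR_def
  have hbR0 : 0 ≤ bR := ENNReal.toReal_nonneg
  set f : ℝ → ℝ := fun r => (volume (E ∩ dil B y r)).toReal with hf_def
  have hdilfin : ∀ r : ℝ, 0 < r → volume (dil B y r) < ⊤ := by
    intro r hr
    rw [volume_dil _ _ hr]
    exact ENNReal.mul_lt_top ENNReal.ofReal_lt_top hBfin
  have hdilvol : ∀ r : ℝ, 0 < r → (volume (dil B y r)).toReal = r^n * bR := by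
    intro r hr
    rw [volume_dil _ _ hr, ENNReal.toReal_mul, ENNReal.toReal_ofReal (by positivity)]
  have hEdilfin : ∀ r : ℝ, 0 < r → volume (E ∩ dil B y r) < ⊤ := fun r hr =>
    lt_of_le_of_lt (measure_mono Set.inter_subset_right) (hdilfin r hr)
  -- Lipschitz-type bound
  have hmono : ∀ r1 r2 : ℝ, 0 < r1 → r1 ≤ r2 → f r1 ≤ f r2 := by
    intro r1 r2 h1 h12
    exact ENNReal.toReal_mono (hEdilfin r2 (h1.trans_le h12)).ne
      (measure_mono (Set.inter_subset_inter_right E (dil_mono hBc hyB h1 h12)))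
  have hlip : ∀ r1 r2 : ℝ, 0 < r1 → r1 ≤ r2 → f r2 ≤ f r1 + (r2^n - r1^n) * bR := by
    intro r1 r2 h1 h12
    have h2 : (0:ℝ) < r2 := h1.trans_le h12
    have hsub : dil B y r1 ⊆ dil B y r2 := dil_mono hBc hyB h1 h12
    have hsplit : volume (E ∩ dil B y r2) ≤
        volume (E ∩ dil B y r1) + volume (dil B y r2 \ dil B y r1) := by
      refine le_trans (measure_mono ?_) (measure_union_le _ _)
      rintro z ⟨hzE, hz2⟩
      by_cases h : z ∈ dil B y r1
      · exact Or.inl ⟨hzE, h⟩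
      · exact Or.inr ⟨hz2, h⟩
    have hdiff : (volume (dil B y r2 \ dil B y r1)).toReal = (r2^n - r1^n) * bR := by
      rw [measure_diff hsub (isOpen_dil hBo y h1).measurableSet.nullMeasurableSet
        (hdilfin r1 h1).ne, ENNReal.toReal_sub_of_le (measure_mono hsub) (hdilfin r2 h2).ne,
        hdilvol r1 h1, hdilvol r2 h2]
      ring
    have h3 := ENNReal.toReal_mono
      ((ENNReal.add_lt_top.2 ⟨hEdilfin r1 h1, lt_of_le_of_lt (measure_mono Set.diff_subset)
        (hdilfin r2 h2)⟩).ne) hsplit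
    rw [ENNReal.toReal_add (hEdilfin r1 h1).ne
      (lt_of_le_of_lt (measure_mono Set.diff_subset) (hdilfin r2 h2)).ne, hdiff] at h3
    exact h3
  -- continuity on [r₀, 1]
  have hg : Continuous fun r : ℝ => r^n * bR := (continuous_pow n).mul continuous_const
  have hfc : ContinuousOn f (Set.Icc r₀ 1) := by
    rw [Metric.continuousOn_iff]
    intro a ha ε hε
    obtain ⟨δ, hδ0, hδ⟩ := Metric.continuous_iff.1 hg a ε hε
    refine ⟨δ, hδ0, fun b hb hab => ?_⟩
    have hb0 : 0 < b := lt_of_lt_of_le hr₀0 hb.1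
    have ha0 : 0 < a := lt_of_lt_of_le hr₀0 ha.1
    have hle : ∀ u v : ℝ, 0 < u → u ≤ v → |f v - f u| ≤ |v^n*bR - u^n*bR| := by
      intro u v hu huv
      have h1 : f u ≤ f v := hmono u v hu huv
      have h2 : f v ≤ f u + (v^n - u^n) * bR := hlip u v hu huv
      have h4 : u^n ≤ v^n := pow_le_pow_left₀ hu.le huv n
      have h5 : 0 ≤ v^n*bR - u^n*bR := by nlinarith
      rw [abs_of_nonneg (by linarith : 0 ≤ f v - f u), abs_of_nonneg h5]
      nlinarith
    have hd : |f b - f a| ≤ |b^n*bR - a^n*bR| := by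
      rcases le_total a b with h | h
      · exact hle a b ha0 h
      · rw [abs_sub_comm, abs_sub_comm (b^n*bR)]
        exact hle b a hb0 h
    have h3 := hδ b hab
    rw [Real.dist_eq] at h3 ⊢
    exact lt_of_le_of_lt hd h3
  -- IVT
  set G : ℝ → ℝ := fun r => f r - βs * (r^n * bR) with hG_def
  have hGc : ContinuousOn G (Set.Icc r₀ 1) :=
    hfc.sub ((continuous_const.mul hg).continuousOn)
  have hG1 : G 1 ≤ 0 := by
    have : f 1 = (volume (E ∩ B)).toReal := by rw [hf_def]; simp [dil_one]
    simp only [hG_def, this, one_pow, one_mul]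
    linarith
  have hGr₀ : 0 ≤ G r₀ := by
    have : f r₀ > βs * (r₀^n * bR) := by
      rw [hf_def]
      have := hdilvol r₀ hr₀0
      calc βs * (r₀^n * bR) = βs * (volume (dil B y r₀)).toReal := by rw [this]
      _ < (volume (E ∩ dil B y r₀)).toReal := hsm
    simp only [hG_def]
    linarith
  have h0mem : (0:ℝ) ∈ Set.Icc (G 1) (G r₀) := ⟨hG1, hGr₀⟩
  obtain ⟨ρ, hρmem, hGρ⟩ := intermediate_value_Icc' hr₀1 hGc h0mem
  refine ⟨ρ, lt_of_lt_of_le hr₀0 hρmem.1, hρmem.2, ?_⟩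
  have hρ0 : 0 < ρ := lt_of_lt_of_le hr₀0 hρmem.1
  have hfρ : f ρ = βs * (ρ^n * bR) := by
    have := hGρ
    simp only [hG_def] at this
    linarith
  calc (volume (E ∩ dil B y ρ)).toReal = f ρ := rfl
  _ = βs * (ρ^n * bR) := hfρ
  _ = βs * (volume (dil B y ρ)).toReal := by rw [hdilvol ρ hρ0]

lemma vitali_count {B : Set (EuclideanSpace ℝ (Fin n))} (hBc : Convex ℝ B)
    (hBo : IsOpen B) (hbd : Bornology.IsBounded B) (hne : B.Nonempty)
    {G : Set (EuclideanSpace ℝ (Fin n))} (hGB : G ⊆ B) (ρ : EuclideanSpace ℝ (Fin n) → ℝ)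
    (hρ0 : ∀ y ∈ G, 0 < ρ y) (hρ1 : ∀ y ∈ G, ρ y ≤ 1) :
    ∃ u ⊆ G, u.Countable ∧ u.PairwiseDisjoint (fun y => dil B y (ρ y)) ∧
      volume G ≤ ENNReal.ofReal (Creal n) * volume (⋃ y ∈ u, dil B y (ρ y)) := by
  classical
  obtain ⟨S, hSm, hSvol, hScomp⟩ := john_comparison hBc hBo hbd hne
  obtain ⟨u, huG, hdisj, hcover⟩ := Vitali.exists_disjoint_subfamily_covering_enlargement
    (fun y => dil B y (ρ y)) G ρ 2 one_lt_two (fun y hy => (hρ0 y hy).le) 1 hρ1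
    (fun y hy => ⟨y, mem_dil_self (hGB hy) _⟩)
  have hBvol0 : 0 < volume B := hBo.measure_pos volume hne
  have hdilsub : ∀ y ∈ u, dil B y (ρ y) ⊆ B := by
    intro y hy
    have h1 := dil_mono hBc (hGB (huG hy)) (hρ0 y (huG hy)) (hρ1 y (huG hy))
    rwa [dil_one] at h1
  -- countability
  have hcnt : u.Countable := by
    have hAm : ∀ i : ↥u, MeasurableSet (dil B (i : EuclideanSpace ℝ (Fin n)) (ρ i)) :=
      fun i => (isOpen_dil hBo _ (hρ0 _ (huG i.2))).measurableSet
    have hdisj' : Pairwise (Function.onFun Disjoint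
        fun i : ↥u => dil B (i : EuclideanSpace ℝ (Fin n)) (ρ i)) :=
      fun i j hij => hdisj i.2 j.2 (fun h => hij (Subtype.ext h))
    have hUfin : volume (⋃ i : ↥u, dil B (i : EuclideanSpace ℝ (Fin n)) (ρ i)) ≠ ⊤ := by
      refine (lt_of_le_of_lt (measure_mono ?_) hbd.measure_lt_top).ne
      exact Set.iUnion_subset (fun i => hdilsub _ i.2)
    have hposcnt := MeasureTheory.Measure.countable_meas_pos_of_disjoint_of_meas_iUnion_ne_top
      (μ := volume) hAm hdisj' hUfin
    have huniv : (Set.univ : Set ↥u) ⊆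
        {i : ↥u | 0 < volume (dil B (i : EuclideanSpace ℝ (Fin n)) (ρ i))} := by
      intro i _
      rw [Set.mem_setOf_eq, volume_dil _ _ (hρ0 _ (huG i.2))]
      exact ENNReal.mul_pos (ENNReal.ofReal_pos.2 (pow_pos (hρ0 _ (huG i.2)) n)).ne' hBvol0.ne'
    have : (Set.univ : Set ↥u).Countable := hposcnt.mono huniv
    rw [Set.countable_univ_iff] at this
    exact Set.countable_coe_iff.1 this
  refine ⟨u, huG, hcnt, hdisj, ?_⟩
  -- covering estimate
  have hGsub : G ⊆ ⋃ y ∈ u, S y (ρ y) := by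
    intro z hz
    obtain ⟨b, hbu, hinter, hle⟩ := hcover z hz
    refine Set.mem_biUnion hbu ?_
    exact hScomp z b (ρ z) (ρ b) (hρ0 z hz) (hρ0 b (huG hbu)) hle hinter
      (mem_dil_self (hGB hz) _)
  calc volume G ≤ volume (⋃ y ∈ u, S y (ρ y)) := measure_mono hGsub
  _ ≤ ∑' i : ↥u, volume (S i (ρ i)) := measure_biUnion_le volume hcnt _
  _ ≤ ∑' i : ↥u, ENNReal.ofReal (Creal n) * volume (dil B (i : EuclideanSpace ℝ (Fin n)) (ρ i)) :=
      ENNReal.tsum_le_tsum (fun i => hSvol _ _ (hρ0 _ (huG i.2)))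
  _ = ENNReal.ofReal (Creal n) * ∑' i : ↥u, volume (dil B (i : EuclideanSpace ℝ (Fin n)) (ρ i)) :=
      ENNReal.tsum_mul_left
  _ = ENNReal.ofReal (Creal n) * volume (⋃ y ∈ u, dil B y (ρ y)) := by
      rw [measure_biUnion hcnt hdisj (fun y hy => (isOpen_dil hBo _ (hρ0 _ (huG hy))).measurableSet)]

lemma Creal_ge_one {n : ℕ} : 1 ≤ Creal n := by
  rw [Creal]
  refine one_le_pow₀ ?_
  nlinarith [Nat.cast_nonneg (α := ℝ) n]

end HaloAux

open HaloAux

set_option maxHeartbeats 2000000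

/-- **Embedding of halo sets for homothecy invariant bases of convex sets:** there are
dimensional constants `c_n, κ_n > 0` such that for every measurable set `E` of finite
measure, every `α ∈ (0,1)` and every `0 < δ < κ_n (1-α)`,
`𝓗_{𝓑,α}(E) ⊆ 𝓗_{𝓑, α(1 + c_n min(α,1-α)^{2n} δ)}(𝓗_{𝓑, 1 - 3n^{3n/2} δ}(E))`. -/
theorem halo_embedding_convex (n : ℕ) (hn : 0 < n) :
    ∃ c κ : ℝ, 0 < c ∧ 0 < κ ∧
      ∀ 𝓑 : Set (Set (EuclideanSpace ℝ (Fin n))),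
        (∀ B ∈ 𝓑, IsOpen B ∧ Bornology.IsBounded B ∧ Convex ℝ B) →
        HomothecyInvariant n 𝓑 →
        ∀ E : Set (EuclideanSpace ℝ (Fin n)), MeasurableSet E → volume E < ⊤ →
        ∀ α ∈ Set.Ioo (0 : ℝ) 1, ∀ δ : ℝ, 0 < δ → δ < κ * (1 - α) →
          halo n 𝓑 E α ⊆
            halo n 𝓑 (halo n 𝓑 E (1 - 3 * (n : ℝ) ^ ((3 * (n : ℝ)) / 2) * δ))
              (α * (1 + c * (min α (1 - α)) ^ (2 * n) * δ)) := by
  classical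
  have hn1 : (1 : ℝ) ≤ (n : ℝ) := by exact_mod_cast hn
  set Kp : ℝ := (n : ℝ) ^ ((3 * (n : ℝ)) / 2) with hKp_def
  have hKp1 : 1 ≤ Kp := by
    rw [hKp_def]
    calc (1:ℝ) = (n : ℝ) ^ (0:ℝ) := by rw [Real.rpow_zero]
    _ ≤ (n : ℝ) ^ ((3 * (n : ℝ)) / 2) :=
        Real.rpow_le_rpow_of_exponent_le hn1 (by positivity)
  have hKp0 : 0 < Kp := lt_of_lt_of_le one_pos hKp1
  have hC1 : 1 ≤ Creal n := Creal_ge_one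
  have hC0 : 0 < Creal n := Creal_pos
  refine ⟨1 / Creal n, 1 / (4 * Kp), by positivity, by positivity, ?_⟩
  intro 𝓑 h𝓑 hinv E hE _hEfin α hα δ hδ0 hδκ
  set c : ℝ := 1 / Creal n with hc_def
  have hc0 : 0 < c := by positivity
  have hc1 : c ≤ 1 := by
    rw [hc_def, div_le_one hC0]; exact hC1
  obtain ⟨hα0, hα1⟩ := hα
  set m : ℝ := min α (1 - α) with hm_def
  have hm0 : 0 < m := lt_min hα0 (by linarith)
  have hm1 : m ≤ 1 := le_trans (min_le_left _ _) hα1.le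
  set m' : ℝ := m ^ (2 * n) with hm'_def
  have hm'0 : 0 < m' := pow_pos hm0 _
  have hm'1 : m' ≤ 1 := pow_le_one₀ hm0.le hm1
  have hKpδ : Kp * δ < (1 - α) / 4 := by
    have h1 : δ < 1 / (4 * Kp) * (1 - α) := hδκ
    calc Kp * δ < Kp * (1 / (4 * Kp) * (1 - α)) := by
          exact mul_lt_mul_of_pos_left h1 hKp0
    _ = (1 - α) / 4 := by field_simp
  have hKpδ0 : 0 < Kp * δ := mul_pos hKp0 hδ0
  set βs : ℝ := 1 - Kp * δ with hβs_def
  set β : ℝ := 1 - 3 * Kp * δ with hβ_def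
  have hββs : β < βs := by rw [hβs_def, hβ_def]; linarith [hKpδ0]
  have hβs1 : βs < 1 := by rw [hβs_def]; linarith
  have hβs0 : 0 ≤ βs := by
    rw [hβs_def]
    have h1 : Kp * δ < 1/4 := by linarith
    linarith
  have hβ1 : β < 1 := by rw [hβ_def]; linarith [hKpδ0]
  set α' : ℝ := α * (1 + c * m' * δ) with hα'_def
  have hα'α : α < α' := by
    have hpos : 0 < α * (c * m' * δ) := mul_pos hα0 (mul_pos (mul_pos hc0 hm'0) hδ0)
    have hexp : α' = α + α * (c * m' * δ) := by rw [hα'_def]; ring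
    linarith
  have hα'1 : α' < 1 := by
    have h1 : c * m' * δ ≤ δ := by
      have hcm : c * m' ≤ 1 := mul_le_one₀ hc1 hm'0.le hm'1
      calc c * m' * δ ≤ 1 * δ := mul_le_mul_of_nonneg_right hcm hδ0.le
      _ = δ := one_mul δ
    have h2 : δ < 1 - α := by
      calc δ < 1 / (4 * Kp) * (1 - α) := hδκ
      _ ≤ 1 * (1 - α) := by
          refine mul_le_mul_of_nonneg_right ?_ (by linarith)
          rw [div_le_one (by positivity)]
          linarith [hKp1]
      _ = 1 - α := one_mul _
    have h3 : α * (c * m' * δ) ≤ c * m' * δ := by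
      have h4 : 0 ≤ c * m' * δ := by positivity
      calc α * (c * m' * δ) ≤ 1 * (c * m' * δ) := mul_le_mul_of_nonneg_right hα1.le h4
      _ = c * m' * δ := one_mul _
    have hexp : α' = α + α * (c * m' * δ) := by rw [hα'_def]; ring
    linarith
  -- start
  intro x hx
  obtain ⟨B, hB𝓑, hxB, hxden⟩ := hx
  obtain ⟨hBo, hbd, hBc⟩ := h𝓑 B hB𝓑
  have hBne : B.Nonempty := ⟨x, hxB⟩
  have hbfin : volume B < ⊤ := hbd.measure_lt_top
  have hb0e : 0 < volume B := hBo.measure_pos volume hBne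
  set b : ℝ := (volume B).toReal with hb_def
  have hb0 : 0 < b := ENNReal.toReal_pos hb0e.ne' hbfin.ne
  set e : ℝ := (volume (E ∩ B)).toReal with he_def
  have hEBfin : volume (E ∩ B) < ⊤ := lt_of_le_of_lt (measure_mono inter_subset_right) hbfin
  have hαbe : α * b < e := hxden
  set H : Set (EuclideanSpace ℝ (Fin n)) := halo n 𝓑 E β with hH_def
  have hHopen : IsOpen H := by
    have hrw : H = ⋃ A ∈ {A ∈ 𝓑 | β * (volume A).toReal < (volume (E ∩ A)).toReal}, A := by
      ext z
      simp only [hH_def, halo, Set.mem_setOf_eq, Set.mem_iUnion, Set.mem_sep_iff]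
      constructor
      · rintro ⟨A, hA, hzA, hlt⟩; exact ⟨A, ⟨hA, hlt⟩, hzA⟩
      · rintro ⟨A, ⟨hA, hlt⟩, hzA⟩; exact ⟨A, hA, hzA, hlt⟩
    rw [hrw]
    exact isOpen_biUnion (fun A hA => (h𝓑 A hA.1).1)
  have hHmeas : MeasurableSet H := hHopen.measurableSet
  -- dil sets are in the basis
  have hdil𝓑 : ∀ (y : EuclideanSpace ℝ (Fin n)) (r : ℝ), 0 < r → dil B y r ∈ 𝓑 :=
    fun y r hr => hinv B hB𝓑 ((1 - r) • y) r hr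
  -- witnesses for halo membership
  have hdil_mem_H : ∀ (y : EuclideanSpace ℝ (Fin n)) (r : ℝ), 0 < r →
      β * (volume (dil B y r)).toReal < (volume (E ∩ dil B y r)).toReal →
      dil B y r ⊆ H := by
    intro y r hr hlt z hz
    exact ⟨dil B y r, hdil𝓑 y r hr, hz, hlt⟩
  -- the a.e. good set
  obtain ⟨R₀, hR₀pos, hBR⟩ := hbd.subset_closedBall_lt 0 0
  have hae := ae_density (B := B) hE hBo hR₀pos hBR
  set N : Set (EuclideanSpace ℝ (Fin n)) :=
    {y | ¬ (y ∈ E ∩ B → ∀ θ : ℝ, θ < 1 → ∀ t : ℝ, 0 < t → ∃ r : ℝ, 0 < r ∧ r ≤ t ∧ r ≤ 1 ∧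
      θ * (volume (dil B y r)).toReal < (volume (E ∩ dil B y r)).toReal)} with hN_def
  have hNnull : volume N = 0 := by
    rw [hN_def]
    exact hae
  set G : Set (EuclideanSpace ℝ (Fin n)) := (E ∩ B) \ N with hG_def
  have hGEB : G ⊆ E ∩ B := diff_subset
  have hGB : G ⊆ B := hGEB.trans inter_subset_right
  have hGvol : volume G = volume (E ∩ B) := measure_diff_null hNnull
  have hGden : ∀ y ∈ G, ∀ θ : ℝ, θ < 1 → ∀ t : ℝ, 0 < t → ∃ r : ℝ, 0 < r ∧ r ≤ t ∧ r ≤ 1 ∧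
      θ * (volume (dil B y r)).toReal < (volume (E ∩ dil B y r)).toReal := by
    intro y hy
    have h2 : y ∉ N := hy.2
    rw [hN_def, Set.mem_setOf_eq, not_not] at h2
    exact h2 hy.1
  -- G ⊆ H
  have hGH : G ⊆ H := by
    intro y hy
    obtain ⟨r, hr0, _, _, hlt⟩ := hGden y hy β hβ1 1 one_pos
    exact hdil_mem_H y r hr0 hlt (mem_dil_self (hGB hy) r)
  -- E ∩ B is a.e. inside H
  have hEBH : volume (E ∩ B ∩ H) = volume (E ∩ B) := by
    have h1 : volume (E ∩ B ∩ H) + volume ((E ∩ B) \ H) = volume (E ∩ B) :=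
      measure_inter_add_diff (E ∩ B) hHmeas
    have h2 : (E ∩ B) \ H ⊆ N := by
      intro z hz
      by_contra hzN
      exact hz.2 (hGH ⟨hz.1, hzN⟩)
    have h3 : volume ((E ∩ B) \ H) = 0 :=
      le_antisymm (le_trans (measure_mono h2) hNnull.le) zero_le
    rw [h3, add_zero] at h1
    exact h1
  -- provide the witness B
  refine ⟨B, hB𝓑, hxB, ?_⟩
  rcases lt_or_ge (βs * b) e with hcaseI | hcaseII
  · -- Case I : high density, B ⊆ H
    have hBH : B ⊆ H := by
      intro z hz
      refine ⟨B, hB𝓑, hz, ?_⟩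
      calc β * (volume B).toReal < βs * b := by
            rw [← hb_def]
            exact mul_lt_mul_of_pos_right hββs hb0
      _ < e := hcaseI
    have hHB : H ∩ B = B := Set.inter_eq_right.2 hBH
    rw [hHB, ← hb_def]
    calc α' * b < 1 * b := mul_lt_mul_of_pos_right hα'1 hb0
    _ = b := one_mul b
  · -- Case II
    by_contra hcon
    push_neg at hcon
    set h' : ℝ := (volume (H ∩ B)).toReal with hh'_def
    have hcon' : h' ≤ α' * b := by
      rw [hh'_def]
      calc (volume (H ∩ B)).toReal ≤ α' * (volume B).toReal := hcon
      _ = α' * b := by rw [← hb_def]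
    -- stopping radii
    have hstop : ∀ y ∈ G, ∃ ρ, 0 < ρ ∧ ρ ≤ 1 ∧
        (volume (E ∩ dil B y ρ)).toReal = βs * (volume (dil B y ρ)).toReal := by
      intro y hy
      obtain ⟨r₀, hr₀0, _, hr₀1, hsm⟩ := hGden y hy βs hβs1 1 one_pos
      exact exists_stopping hE hBc hBo hbfin (hGB hy) hβs0
        (by rw [← he_def, ← hb_def]; exact hcaseII) hr₀0 hr₀1 hsm
    set ρ : EuclideanSpace ℝ (Fin n) → ℝ := fun y =>
      if h : ∃ ρ, 0 < ρ ∧ ρ ≤ 1 ∧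
        (volume (E ∩ dil B y ρ)).toReal = βs * (volume (dil B y ρ)).toReal
      then h.choose else 1 with hρ_def
    have hρspec : ∀ y ∈ G, 0 < ρ y ∧ ρ y ≤ 1 ∧
        (volume (E ∩ dil B y (ρ y))).toReal = βs * (volume (dil B y (ρ y))).toReal := by
      intro y hy
      have h := hstop y hy
      rw [hρ_def]
      simp only [dif_pos h]
      exact h.choose_spec
    obtain ⟨u, huG, hcnt, hdisj, hcount⟩ := vitali_count hBc hBo hbd hBne hGB ρ
      (fun y hy => (hρspec y hy).1) (fun y hy => (hρspec y hy).2.1)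
    set W : Set (EuclideanSpace ℝ (Fin n)) := ⋃ y ∈ u, dil B y (ρ y) with hW_def
    have hWB : W ⊆ B := by
      rw [hW_def]
      refine Set.iUnion₂_subset (fun y hy => ?_)
      have h1 := dil_mono hBc (hGB (huG hy)) (hρspec y (huG hy)).1 (hρspec y (huG hy)).2.1
      rwa [dil_one] at h1
    have hWfin : volume W < ⊤ := lt_of_le_of_lt (measure_mono hWB) hbfin
    set s : ℝ := (volume W).toReal with hs_def
    -- counting bound in reals
    have hcountR : e ≤ Creal n * s := by
      have h1 := ENNReal.toReal_mono
        (by exact (ENNReal.mul_lt_top ENNReal.ofReal_lt_top hWfin).ne) hcount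
      rw [hGvol] at h1
      rwa [ENNReal.toReal_mul, ENNReal.toReal_ofReal hC0.le, ← he_def, ← hs_def] at h1
    -- defect identity
    have hdilfin : ∀ y ∈ u, volume (dil B y (ρ y)) < ⊤ := by
      intro y hy
      refine lt_of_le_of_lt (measure_mono ?_) hbfin
      have h1 := dil_mono hBc (hGB (huG hy)) (hρspec y (huG hy)).1 (hρspec y (huG hy)).2.1
      rwa [dil_one] at h1
    have hdef : ∀ y ∈ u, volume (dil B y (ρ y) \ E) =
        ENNReal.ofReal (1 - βs) * volume (dil B y (ρ y)) := by
      intro y hy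
      have hEfin : volume (E ∩ dil B y (ρ y)) < ⊤ :=
        lt_of_le_of_lt (measure_mono inter_subset_right) (hdilfin y hy)
      have hrw : dil B y (ρ y) \ E = dil B y (ρ y) \ (E ∩ dil B y (ρ y)) := by
        ext z; simp only [Set.mem_diff, Set.mem_inter_iff]; tauto
      have h1 : volume (dil B y (ρ y) \ E) =
          volume (dil B y (ρ y)) - volume (E ∩ dil B y (ρ y)) := by
        rw [hrw, measure_diff inter_subset_right
          ((hE.inter (isOpen_dil hBo y (hρspec y (huG hy)).1).measurableSet).nullMeasurableSet)
          hEfin.ne]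
      rw [h1]
      have h2 : (volume (dil B y (ρ y)) - volume (E ∩ dil B y (ρ y))).toReal =
          (ENNReal.ofReal (1 - βs) * volume (dil B y (ρ y))).toReal := by
        rw [ENNReal.toReal_sub_of_le (measure_mono inter_subset_right) (hdilfin y hy).ne,
          ENNReal.toReal_mul, ENNReal.toReal_ofReal (by linarith : (0:ℝ) ≤ 1 - βs),
          (hρspec y (huG hy)).2.2]
        ring
      have h3 : volume (dil B y (ρ y)) - volume (E ∩ dil B y (ρ y)) ≠ ⊤ :=
        (lt_of_le_of_lt (tsub_le_self) (hdilfin y hy)).ne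
      have h4 : ENNReal.ofReal (1 - βs) * volume (dil B y (ρ y)) ≠ ⊤ :=
        (ENNReal.mul_lt_top ENNReal.ofReal_lt_top (hdilfin y hy)).ne
      exact (ENNReal.toReal_eq_toReal_iff' h3 h4).1 h2
    -- defect of the union
    have hWdef : volume (W \ E) = ENNReal.ofReal (1 - βs) * volume W := by
      have hmeas : ∀ y ∈ u, MeasurableSet (dil B y (ρ y)) :=
        fun y hy => (isOpen_dil hBo y (hρspec y (huG hy)).1).measurableSet
      have h1 : W \ E = ⋃ y ∈ u, (dil B y (ρ y) \ E) := by
        rw [hW_def]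
        ext z
        simp only [Set.mem_diff, Set.mem_iUnion]
        tauto
      rw [h1, measure_biUnion hcnt (hdisj.mono_on (fun y hy => Set.diff_subset))
        (fun y hy => (hmeas y hy).diff hE)]
      have h2 : ∀ i : ↥u, volume (dil B (i : EuclideanSpace ℝ (Fin n)) (ρ i) \ E) =
          ENNReal.ofReal (1 - βs) * volume (dil B (i : EuclideanSpace ℝ (Fin n)) (ρ i)) :=
        fun i => hdef _ i.2
      rw [tsum_congr h2, ENNReal.tsum_mul_left, ← measure_biUnion hcnt hdisj hmeas]
    -- the defect sits inside (H \ E) ∩ B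
    have hWEH : W \ E ⊆ (H \ E) ∩ B := by
      intro z hz
      rw [hW_def] at hz
      obtain ⟨hzW, hzE⟩ := hz
      rw [Set.mem_iUnion₂] at hzW
      obtain ⟨y, hy, hzy⟩ := hzW
      have hsub : dil B y (ρ y) ⊆ H := by
        refine hdil_mem_H y (ρ y) (hρspec y (huG hy)).1 ?_
        rw [(hρspec y (huG hy)).2.2]
        have hv0 : 0 < (volume (dil B y (ρ y))).toReal := by
          refine ENNReal.toReal_pos ?_ (hdilfin y hy).ne
          rw [volume_dil _ _ (hρspec y (huG hy)).1]
          exact (ENNReal.mul_pos (ENNReal.ofReal_pos.2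
            (pow_pos (hρspec y (huG hy)).1 n)).ne' hb0e.ne').ne'
        exact mul_lt_mul_of_pos_right hββs hv0
      have hsubB : dil B y (ρ y) ⊆ B := by
        have h1 := dil_mono hBc (hGB (huG hy)) (hρspec y (huG hy)).1 (hρspec y (huG hy)).2.1
        rwa [dil_one] at h1
      exact ⟨⟨hsub hzy, hzE⟩, hsubB hzy⟩
    -- upper bound for the halo defect
    have hHEB : (volume ((H \ E) ∩ B)).toReal = h' - e := by
      have h1 : (H \ E) ∩ B = (H ∩ B) \ (H ∩ B ∩ E) := by
        ext z
        simp only [Set.mem_diff, Set.mem_inter_iff]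
        tauto
      have h2 : volume (H ∩ B ∩ E) = volume (E ∩ B) := by
        have : H ∩ B ∩ E = E ∩ B ∩ H := by
          ext z; simp only [Set.mem_inter_iff]; tauto
        rw [this, hEBH]
      have hHBfin : volume (H ∩ B) < ⊤ :=
        lt_of_le_of_lt (measure_mono inter_subset_right) hbfin
      rw [h1, measure_diff inter_subset_left
        (((hHmeas.inter hBo.measurableSet).inter hE).nullMeasurableSet)
        (lt_of_le_of_lt (measure_mono inter_subset_left) hHBfin).ne,
        ENNReal.toReal_sub_of_le (measure_mono inter_subset_left) hHBfin.ne, h2,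
        ← he_def, ← hh'_def]
    -- combine
    have hchain : (1 - βs) * s ≤ h' - e := by
      have h1 : volume (W \ E) ≤ volume ((H \ E) ∩ B) := measure_mono hWEH
      have h2 := ENNReal.toReal_mono
        (lt_of_le_of_lt (measure_mono (inter_subset_right.trans hBR)) measure_closedBall_lt_top).ne h1
      rw [hWdef, ENNReal.toReal_mul, ENNReal.toReal_ofReal (by linarith : (0:ℝ) ≤ 1 - βs),
        ← hs_def, hHEB] at h2
      exact h2
    -- final contradiction
    have h1βs : 1 - βs = Kp * δ := by rw [hβs_def]; ring
    rw [h1βs] at hchain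
    -- h' - e < c * m' * δ * e
    have hA : h' - e < c * m' * δ * e := by
      have h1 : h' - e ≤ α' * b - e := by linarith
      have h2 : α' * b - e = α * b - e + α * b * (c * m' * δ) := by
        rw [hα'_def]; ring
      have h3 : α * b * (c * m' * δ) < e * (c * m' * δ) :=
        mul_lt_mul_of_pos_right hαbe (by positivity)
      have h4 : e * (c * m' * δ) = c * m' * δ * e := by ring
      linarith
    -- c * m' * δ * e ≤ Kp * δ * s
    have hB2 : c * m' * δ * e ≤ Kp * δ * s := by
      have hs0 : 0 ≤ s := ENNReal.toReal_nonneg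
      have h1 : c * e ≤ s := by
        rw [hc_def]
        rw [div_mul_eq_mul_div, div_le_iff₀ hC0]
        calc 1 * e = e := one_mul e
        _ ≤ Creal n * s := hcountR
        _ = s * Creal n := mul_comm _ _
      have he0 : (0:ℝ) ≤ e := ENNReal.toReal_nonneg
      have h2 : c * m' * δ * e ≤ c * δ * e := by
        calc c * m' * δ * e = (c * δ * e) * m' := by ring
        _ ≤ (c * δ * e) * 1 := mul_le_mul_of_nonneg_left hm'1
            (mul_nonneg (mul_nonneg hc0.le hδ0.le) he0)
        _ = c * δ * e := mul_one _
      have h3 : c * δ * e ≤ δ * s := by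
        have h5 : δ * (c * e) ≤ δ * s := mul_le_mul_of_nonneg_left h1 hδ0.le
        calc c * δ * e = δ * (c * e) := by ring
        _ ≤ δ * s := h5
      have h4 : δ * s ≤ Kp * δ * s := by
        calc δ * s = 1 * (δ * s) := (one_mul _).symm
        _ ≤ Kp * (δ * s) := mul_le_mul_of_nonneg_right hKp1 (mul_nonneg hδ0.le hs0)
        _ = Kp * δ * s := by ring
      linarith
    linarith
end
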